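/- arXiv:1710.11591 — 4 statements merged into one kernel-verified Lean document; each statement's English description precedes it below -/
import Mathlib

section
/- Let ω ∈ ℝ^d with ω ≠ 0 and c = ω ⊗ ω (i.e., c_{ij} = ω_i ω_j). A function u ∈ C²(Ω) on an open hypercube Ω ⊂ ℝ^d satisfies ∂²u/∂x_i∂x_j + c_{ij} u = 0 for all i,j = 1,…,d if and only if there exist constants C₁, C₂ ∈ ℝ such that u(x) = C₁ cos(ω·x) + C₂ sin(ω·x) for all x ∈ Ω. -/
open Set
open scoped RealInnerProductSpace

open Set

lemma osc_aux_const {T : Set ℝ} (hT : Convex ℝ T) (hTo : IsOpen T) {f : ℝ → ℝ}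
    (hf : ∀ t ∈ T, HasDerivAt f 0 t) {s t : ℝ} (hs : s ∈ T) (ht : t ∈ T) : f s = f t := by
  refine hT.is_const_of_fderivWithin_eq_zero
    (fun x hx => ((hf x hx).differentiableAt).differentiableWithinAt) (fun x hx => ?_) hs ht
  rw [fderivWithin_of_isOpen hTo hx, (hf x hx).hasFDerivAt.fderiv]
  exact ContinuousLinearMap.ext fun y => by simp

lemma osc_aux_ode {T : Set ℝ} (hT : Convex ℝ T) (hTo : IsOpen T) (h0 : (0:ℝ) ∈ T)
    {f g : ℝ → ℝ} {κ : ℝ} (hκ : κ ≠ 0)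
    (hf : ∀ t ∈ T, HasDerivAt f (g t) t)
    (hg : ∀ t ∈ T, HasDerivAt g (-(κ ^ 2 * f t)) t) :
    ∀ t ∈ T, f t = f 0 * Real.cos (κ * t) + (g 0 / κ) * Real.sin (κ * t) := by
  intro t ht
  set w : ℝ → ℝ := fun t => f t - f 0 * Real.cos (κ * t) - (g 0 / κ) * Real.sin (κ * t) with hw
  set w' : ℝ → ℝ := fun t => g t + f 0 * κ * Real.sin (κ * t) - g 0 * Real.cos (κ * t) with hw'
  have hbase : ∀ s : ℝ, HasDerivAt (fun r : ℝ => κ * r) κ s := by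
    intro s; simpa using (hasDerivAt_id s).const_mul κ
  have hcos : ∀ s : ℝ, HasDerivAt (fun r => Real.cos (κ * r)) (-Real.sin (κ * s) * κ) s :=
    fun s => (Real.hasDerivAt_cos (κ * s)).comp s (hbase s)
  have hsin : ∀ s : ℝ, HasDerivAt (fun r => Real.sin (κ * r)) (Real.cos (κ * s) * κ) s :=
    fun s => (Real.hasDerivAt_sin (κ * s)).comp s (hbase s)
  have hwd : ∀ s ∈ T, HasDerivAt w (w' s) s := by
    intro s hs
    have := ((hf s hs).sub (((hcos s).const_mul (f 0)))).sub ((hsin s).const_mul (g 0 / κ))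
    refine this.congr_deriv ?_
    field_simp [hw']; ring
  have hwd' : ∀ s ∈ T, HasDerivAt w' (-(κ ^ 2 * w s)) s := by
    intro s hs
    have := ((hg s hs).add ((hsin s).const_mul (f 0 * κ))).sub ((hcos s).const_mul (g 0))
    refine this.congr_deriv ?_
    simp only [hw]; field_simp; ring
  set Ef : ℝ → ℝ := fun s => (w' s) ^ 2 + κ ^ 2 * (w s) ^ 2 with hEf
  have hEd : ∀ s ∈ T, HasDerivAt Ef 0 s := by
    intro s hs
    have := (((hwd' s hs).pow 2)).add (((hwd s hs).pow 2).const_mul (κ ^ 2))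
    refine this.congr_deriv ?_
    ring
  have hE0 : Ef t = Ef 0 := osc_aux_const hT hTo hEd ht h0
  have hw0 : w 0 = 0 := by simp [hw]
  have hw'0 : w' 0 = 0 := by simp [hw']
  have hEt : (w' t) ^ 2 + κ ^ 2 * (w t) ^ 2 = 0 := by
    simpa [hEf, hw0, hw'0] using hE0
  have h1 : κ ^ 2 * (w t) ^ 2 = 0 := by nlinarith [sq_nonneg (w' t), sq_nonneg (w t), sq_nonneg κ]
  have h2 : w t = 0 := by
    rcases mul_eq_zero.1 h1 with h | h
    · exact absurd (pow_eq_zero_iff (by norm_num) |>.1 h) hκ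
    · exact pow_eq_zero_iff (by norm_num) |>.1 h
  have : f t - f 0 * Real.cos (κ * t) - (g 0 / κ) * Real.sin (κ * t) = 0 := h2
  linarith
open Set
open scoped RealInnerProductSpace

variable {d : ℕ}

lemma osc_aux_line_convex (Ω : Set (EuclideanSpace ℝ (Fin d))) (hc : Convex ℝ Ω)
    (p v : EuclideanSpace ℝ (Fin d)) : Convex ℝ {t : ℝ | p + t • v ∈ Ω} := by
  intro t₁ h₁ t₂ h₂ α β hα hβ hαβ
  have : p + (α * t₁ + β * t₂) • v = α • (p + t₁ • v) + β • (p + t₂ • v) := by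
    have h : α • (p + t₁ • v) + β • (p + t₂ • v) = (α + β) • p + (α * t₁ + β * t₂) • v := by
      module
    rw [h, hαβ, one_smul]
  simpa [this] using hc h₁ h₂ hα hβ hαβ
  
lemma osc_aux_line_open (Ω : Set (EuclideanSpace ℝ (Fin d))) (ho : IsOpen Ω)
    (p v : EuclideanSpace ℝ (Fin d)) : IsOpen {t : ℝ | p + t • v ∈ Ω} := by
  have : Continuous fun t : ℝ => p + t • v := by continuity
  exact ho.preimage this

lemma osc_aux_omega_open (a b : Fin d → ℝ) :
    IsOpen {x : EuclideanSpace ℝ (Fin d) | ∀ k, x k ∈ Ioo (a k) (b k)} := by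
  have : {x : EuclideanSpace ℝ (Fin d) | ∀ k, x k ∈ Ioo (a k) (b k)}
      = ⋂ k, (fun x : EuclideanSpace ℝ (Fin d) => x k) ⁻¹' (Ioo (a k) (b k)) := by
    ext x; simp [Set.mem_iInter]
  rw [this]
  exact isOpen_iInter_of_finite fun k =>
    (isOpen_Ioo).preimage (EuclideanSpace.proj k).continuous

lemma osc_aux_omega_convex (a b : Fin d → ℝ) :
    Convex ℝ {x : EuclideanSpace ℝ (Fin d) | ∀ k, x k ∈ Ioo (a k) (b k)} := by
  intro x hx y hy α β hα hβ hαβ k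
  have : (α • x + β • y) k = α * x k + β * y k := rfl
  rw [this]
  exact (convex_Ioo (a k) (b k)) (hx k) (hy k) hα hβ hαβ
open Set

variable {d : ℕ}

section
variable {Ω : Set (EuclideanSpace ℝ (Fin d))} (hΩo : IsOpen Ω)
  {u : EuclideanSpace ℝ (Fin d) → ℝ} (hu : ContDiffOn ℝ 2 u Ω)

include hΩo hu

/-- u is differentiable at points of Ω -/
lemma osc_aux_diff_u {x} (hx : x ∈ Ω) : DifferentiableAt ℝ u x :=
  (hu.differentiableOn (by norm_num)).differentiableAt (hΩo.mem_nhds hx)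

/-- fderiv u is differentiable at points of Ω -/
lemma osc_aux_diff_F {x} (hx : x ∈ Ω) : DifferentiableAt ℝ (fderiv ℝ u) x := by
  have h1 : ContDiffOn ℝ 1 (fderiv ℝ u) Ω := hu.fderiv_of_isOpen hΩo (by norm_num)
  exact (h1.differentiableOn (by norm_num)).differentiableAt (hΩo.mem_nhds hx)

/-- the function y ↦ (fderiv u y) w has the expected fderiv -/
lemma osc_aux_hasfderiv_Fw (w : EuclideanSpace ℝ (Fin d)) {x} (hx : x ∈ Ω) :
    HasFDerivAt (fun y => fderiv ℝ u y w)
      ((ContinuousLinearMap.apply ℝ ℝ w).comp (fderiv ℝ (fderiv ℝ u) x)) x :=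
  (ContinuousLinearMap.apply ℝ ℝ w).hasFDerivAt.comp x (osc_aux_diff_F hΩo hu hx).hasFDerivAt

lemma osc_aux_fderiv_Fw (w : EuclideanSpace ℝ (Fin d)) {x} (hx : x ∈ Ω)
    (v : EuclideanSpace ℝ (Fin d)) :
    fderiv ℝ (fun y => fderiv ℝ u y w) x v = fderiv ℝ (fderiv ℝ u) x v w := by
  rw [(osc_aux_hasfderiv_Fw hΩo hu w hx).fderiv]; rfl

/-- derivative of u along a line -/
lemma osc_aux_line_f (p v : EuclideanSpace ℝ (Fin d)) {t : ℝ} (ht : p + t • v ∈ Ω) :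
    HasDerivAt (fun s : ℝ => u (p + s • v)) (fderiv ℝ u (p + t • v) v) t := by
  have hL : HasDerivAt (fun s : ℝ => p + s • v) v t := by
    simpa using ((hasDerivAt_id t).smul_const v).const_add p
  exact (osc_aux_diff_u hΩo hu ht).hasFDerivAt.comp_hasDerivAt t hL

/-- derivative of directional derivative along a line -/
lemma osc_aux_line_g (p v w : EuclideanSpace ℝ (Fin d)) {t : ℝ} (ht : p + t • v ∈ Ω) :
    HasDerivAt (fun s : ℝ => fderiv ℝ u (p + s • v) w)
      (fderiv ℝ (fderiv ℝ u) (p + t • v) v w) t := by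
  have hL : HasDerivAt (fun s : ℝ => p + s • v) v t := by
    simpa using ((hasDerivAt_id t).smul_const v).const_add p
  have := (osc_aux_hasfderiv_Fw hΩo hu w ht).comp_hasDerivAt t hL
  exact this

end
open Set

variable {d : ℕ}

lemma osc_aux_expand (v : EuclideanSpace ℝ (Fin d)) :
    v = ∑ i, v i • EuclideanSpace.single i (1:ℝ) := by
  have h := (EuclideanSpace.basisFun (Fin d) ℝ).toBasis.sum_repr v
  simpa [OrthonormalBasis.coe_toBasis_repr_apply, OrthonormalBasis.coe_toBasis] using h.symm

lemma osc_aux_inner_sum (ω v : EuclideanSpace ℝ (Fin d)) : ⟪ω, v⟫ = ∑ i, ω i * v i := by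
  simp [PiLp.inner_apply, RCLike.inner_apply, conj_trivial]
  exact Finset.sum_congr rfl fun i _ => mul_comm _ _

lemma osc_aux_bilin (ω : EuclideanSpace ℝ (Fin d)) (r : ℝ)
    (B : EuclideanSpace ℝ (Fin d) →L[ℝ] EuclideanSpace ℝ (Fin d) →L[ℝ] ℝ)
    (h : ∀ i j, B (EuclideanSpace.single i (1:ℝ)) (EuclideanSpace.single j (1:ℝ))
      = -(ω i * ω j * r)) (v w : EuclideanSpace ℝ (Fin d)) :
    B v w = -(⟪ω, v⟫ * ⟪ω, w⟫ * r) := by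
  have hBv : B v w = ∑ i, v i * (B (EuclideanSpace.single i 1) w) := by
    conv_lhs => rw [osc_aux_expand v]
    rw [map_sum]
    simp [ContinuousLinearMap.sum_apply]
  have hBw : ∀ i, B (EuclideanSpace.single i (1:ℝ)) w
      = ∑ j, w j * (-(ω i * ω j * r)) := by
    intro i
    conv_lhs => rw [osc_aux_expand w]
    rw [map_sum]
    simp [h]
  rw [hBv]
  simp only [hBw]
  rw [osc_aux_inner_sum, osc_aux_inner_sum, Finset.sum_mul_sum, Finset.sum_mul,
    ← Finset.sum_neg_distrib]
  refine Finset.sum_congr rfl fun i _ => ?_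
  rw [Finset.mul_sum, Finset.sum_mul, ← Finset.sum_neg_distrib]
  refine Finset.sum_congr rfl fun j _ => ?_
  ring

lemma osc_forward {d : ℕ} (Ω : Set (EuclideanSpace ℝ (Fin d))) (hΩo : IsOpen Ω)
    (hΩc : Convex ℝ Ω) (x₀ : EuclideanSpace ℝ (Fin d)) (hx₀ : x₀ ∈ Ω)
    (ω : EuclideanSpace ℝ (Fin d)) (hω : ω ≠ 0)
    (u : EuclideanSpace ℝ (Fin d) → ℝ) (hu : ContDiffOn ℝ 2 u Ω)
    (hB : ∀ x ∈ Ω, ∀ v w : EuclideanSpace ℝ (Fin d),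
      fderiv ℝ (fderiv ℝ u) x v w = -(⟪ω, v⟫ * ⟪ω, w⟫ * u x)) :
    ∃ C₁ C₂ : ℝ, ∀ x ∈ Ω, u x = C₁ * Real.cos ⟪ω, x⟫ + C₂ * Real.sin ⟪ω, x⟫ := by
  set c : ℝ := ⟪ω, ω⟫ with hcdef
  have hc : 0 < c := by
    rw [hcdef, real_inner_self_eq_norm_sq]
    exact pow_pos (norm_pos_iff.2 hω) 2
  -- Step 1 : for e ⊥ ω the directional derivative is constant on Ω
  have step1 : ∀ e : EuclideanSpace ℝ (Fin d), ⟪ω, e⟫ = 0 → ∀ x ∈ Ω, ∀ y ∈ Ω,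
      fderiv ℝ u x e = fderiv ℝ u y e := by
    intro e he x hx y hy
    refine hΩc.is_const_of_fderivWithin_eq_zero (f := fun z => fderiv ℝ u z e)
      (fun z hz => (osc_aux_hasfderiv_Fw hΩo hu e hz).differentiableAt.differentiableWithinAt)
      (fun z hz => ?_) hx hy
    rw [fderivWithin_of_isOpen hΩo hz, (osc_aux_hasfderiv_Fw hΩo hu e hz).fderiv]
    refine ContinuousLinearMap.ext fun v => ?_
    have : fderiv ℝ (fderiv ℝ u) z v e = -(⟪ω, v⟫ * ⟪ω, e⟫ * u z) := hB z hz v e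
    simpa [he] using this
  -- Step 2 : for e ⊥ ω the directional derivative vanishes on Ω
  have step2 : ∀ e : EuclideanSpace ℝ (Fin d), ⟪ω, e⟫ = 0 → ∀ x ∈ Ω,
      fderiv ℝ u x e = 0 := by
    intro e he x hx
    set k : ℝ := fderiv ℝ u x₀ e with hkdef
    suffices hk : k = 0 by rw [step1 e he x hx x₀ hx₀, ← hkdef, hk]
    obtain ⟨ε, hε, hball⟩ := Metric.isOpen_iff.1 hΩo x₀ hx₀
    set t₀ : ℝ := min (ε / (2 * (‖ω‖ + 1))) (Real.pi / c) with ht₀def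
    have hωn : (0:ℝ) < ‖ω‖ + 1 := by positivity
    have ht₀pos : 0 < t₀ := by
      apply lt_min
      · positivity
      · positivity
    have hx₁ : x₀ + t₀ • ω ∈ Ω := by
      apply hball
      rw [Metric.mem_ball, dist_eq_norm, add_sub_cancel_left, norm_smul, Real.norm_eq_abs,
        abs_of_pos ht₀pos]
      have h1 : t₀ ≤ ε / (2 * (‖ω‖ + 1)) := min_le_left _ _
      have h2 : ‖ω‖ < ‖ω‖ + 1 := by linarith
      have h3 : 0 ≤ ‖ω‖ := norm_nonneg ω
      calc t₀ * ‖ω‖ ≤ ε / (2 * (‖ω‖ + 1)) * ‖ω‖ := by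
            exact mul_le_mul_of_nonneg_right h1 h3
        _ < ε := by
            rw [div_mul_eq_mul_div, div_lt_iff₀ (by positivity)]
            nlinarith
    have hcos₀ : Real.cos (c * t₀) ≠ 1 := by
      have hle : c * t₀ ≤ Real.pi := by
        have h1 : t₀ ≤ Real.pi / c := min_le_right _ _
        calc c * t₀ ≤ c * (Real.pi / c) := by exact mul_le_mul_of_nonneg_left h1 hc.le
          _ = Real.pi := by field_simp
      have hpos : 0 < c * t₀ := by positivity
      have hπ : 0 < Real.pi := Real.pi_pos
      intro hcontra
      have := (Real.cos_eq_one_iff_of_lt_of_lt (x := c * t₀)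
        (by linarith) (by linarith)).1 hcontra
      linarith
    obtain ⟨ε₁, hε₁, hball₁⟩ := Metric.isOpen_iff.1 hΩo _ hx₁
    set δ : ℝ := min (ε / (‖e‖ + 1)) (ε₁ / (‖e‖ + 1)) with hδdef
    have hen : (0:ℝ) < ‖e‖ + 1 := by positivity
    have hδpos : 0 < δ := lt_min (by positivity) (by positivity)
    have hse : ∀ s : ℝ, |s| < δ → ‖s • e‖ < min ε ε₁ := by
      intro s hs
      rw [norm_smul, Real.norm_eq_abs]
      have h3 : 0 ≤ ‖e‖ := norm_nonneg e
      have h4 : |s| * ‖e‖ ≤ |s| * (‖e‖ + 1) := by nlinarith [abs_nonneg s]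
      rcases lt_min_iff.1 hs with ⟨hs1, hs2⟩
      apply lt_min
      · calc |s| * ‖e‖ ≤ |s| * (‖e‖ + 1) := h4
          _ < (ε / (‖e‖ + 1)) * (‖e‖ + 1) := by
              exact mul_lt_mul_of_pos_right hs1 hen
          _ = ε := by field_simp
      · calc |s| * ‖e‖ ≤ |s| * (‖e‖ + 1) := h4
          _ < (ε₁ / (‖e‖ + 1)) * (‖e‖ + 1) := by
              exact mul_lt_mul_of_pos_right hs2 hen
          _ = ε₁ := by field_simp
    have hmem₁ : ∀ s : ℝ, |s| < δ → x₀ + s • e ∈ Ω := by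
      intro s hs
      apply hball
      rw [Metric.mem_ball, dist_eq_norm, add_sub_cancel_left]
      exact (lt_min_iff.1 (hse s hs)).1
    have hmem₂ : ∀ s : ℝ, |s| < δ → (x₀ + s • e) + t₀ • ω ∈ Ω := by
      intro s hs
      apply hball₁
      rw [Metric.mem_ball, dist_eq_norm]
      have : (x₀ + s • e) + t₀ • ω - (x₀ + t₀ • ω) = s • e := by abel
      rw [this]
      exact (lt_min_iff.1 (hse s hs)).2
    set S : Set ℝ := Ioo (-δ) δ with hSdef
    have hS0 : (0:ℝ) ∈ S := by constructor <;> simp [hδpos] <;> linarith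
    have hSmem : ∀ s ∈ S, |s| < δ := by
      intro s hs; rw [abs_lt]; exact ⟨hs.1, hs.2⟩
    -- the ω-directional derivative is constant along e
    have hφ : ∀ s ∈ S, fderiv ℝ u (x₀ + s • e) ω = fderiv ℝ u x₀ ω := by
      intro s hs
      have hconst : ∀ t ∈ S, HasDerivAt (fun r : ℝ => fderiv ℝ u (x₀ + r • e) ω) 0 t := by
        intro t ht
        have h := osc_aux_line_g hΩo hu x₀ e ω (hmem₁ t (hSmem t ht))
        rw [hB _ (hmem₁ t (hSmem t ht)) e ω, he] at h
        simpa using h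
      have := osc_aux_const (convex_Ioo _ _) isOpen_Ioo hconst hs hS0
      simpa using this
    -- u is affine along e through x₀
    have hψ : ∀ s ∈ S, u (x₀ + s • e) = u x₀ + k * s := by
      intro s hs
      have hconst : ∀ t ∈ S, HasDerivAt (fun r : ℝ => u (x₀ + r • e) - k * r) 0 t := by
        intro t ht
        have h1 := osc_aux_line_f hΩo hu x₀ e (hmem₁ t (hSmem t ht))
        have h2 : fderiv ℝ u (x₀ + t • e) e = k := step1 e he _ (hmem₁ t (hSmem t ht)) x₀ hx₀
        rw [h2] at h1
        have h3 : HasDerivAt (fun r : ℝ => k * r) k t := by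
          simpa using (hasDerivAt_id t).const_mul k
        have h4 : HasDerivAt (fun r : ℝ => u (x₀ + r • e) - k * r) (k - k) t := h1.sub h3
        simpa using h4
      have := osc_aux_const (convex_Ioo _ _) isOpen_Ioo hconst hs hS0
      simp only [zero_smul, add_zero, mul_zero, sub_zero] at this
      linarith [this]
    -- the ODE along ω at each base point x₀ + s • e
    have hformula : ∀ s ∈ S, u ((x₀ + s • e) + t₀ • ω)
        = (u x₀ + k * s) * Real.cos (c * t₀)
          + (fderiv ℝ u x₀ ω / c) * Real.sin (c * t₀) := by
      intro s hs
      set p := x₀ + s • e with hpdef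
      set T : Set ℝ := {t : ℝ | p + t • ω ∈ Ω} with hTdef
      have hT0 : (0:ℝ) ∈ T := by
        show p + (0:ℝ) • ω ∈ Ω; simpa using hmem₁ s (hSmem s hs)
      have hTt₀ : t₀ ∈ T := hmem₂ s (hSmem s hs)
      have hode := osc_aux_ode (osc_aux_line_convex Ω hΩc p ω)
        (osc_aux_line_open Ω hΩo p ω) hT0 (κ := c) hc.ne'
        (f := fun t => u (p + t • ω)) (g := fun t => fderiv ℝ u (p + t • ω) ω)
        (fun t ht => osc_aux_line_f hΩo hu p ω ht)
        (fun t ht => by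
          have h := osc_aux_line_g hΩo hu p ω ω ht
          rw [hB _ ht ω ω] at h
          convert h using 1
          rw [← hcdef]; ring) t₀ hTt₀
      simp only [zero_smul, add_zero] at hode
      rw [hode, hψ s hs, hφ s hs]
    -- compare derivatives at s = 0
    have hL : HasDerivAt (fun s : ℝ => u ((x₀ + s • e) + t₀ • ω)) k 0 := by
      have h1 := osc_aux_line_f hΩo hu (x₀ + t₀ • ω) e (t := 0) (by simpa using hx₁)
      have h2 : fderiv ℝ u ((x₀ + t₀ • ω) + (0:ℝ) • e) e = k := by
        refine step1 e he _ (by simpa using hx₁) x₀ hx₀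
      rw [h2] at h1
      have hfun : (fun s : ℝ => u ((x₀ + t₀ • ω) + s • e))
          = fun s : ℝ => u ((x₀ + s • e) + t₀ • ω) := by
        funext s; rw [add_right_comm]
      rwa [hfun] at h1
    have hR : HasDerivAt (fun s : ℝ => (u x₀ + k * s) * Real.cos (c * t₀)
        + (fderiv ℝ u x₀ ω / c) * Real.sin (c * t₀)) (k * Real.cos (c * t₀)) 0 := by
      have h1 : HasDerivAt (fun s : ℝ => u x₀ + k * s) k 0 := by
        simpa using ((hasDerivAt_id (0:ℝ)).const_mul k).const_add (u x₀)
      simpa using (h1.mul_const (Real.cos (c * t₀))).add_const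
        ((fderiv ℝ u x₀ ω / c) * Real.sin (c * t₀))
    have hLR : HasDerivAt (fun s : ℝ => u ((x₀ + s • e) + t₀ • ω))
        (k * Real.cos (c * t₀)) 0 := by
      refine hR.congr_of_eventuallyEq ?_
      filter_upwards [isOpen_Ioo.mem_nhds hS0] with s hs
      exact hformula s hs
    have hkk : k = k * Real.cos (c * t₀) := hL.unique hLR
    by_contra hk0
    refine hcos₀ ?_
    have hk1 : k * 1 = k * Real.cos (c * t₀) := by linarith
    exact (mul_left_cancel₀ hk0 hk1).symm
  -- Step 3 : the gradient is parallel to ω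
  have step3 : ∀ x ∈ Ω, ∀ v : EuclideanSpace ℝ (Fin d),
      fderiv ℝ u x v = (⟪ω, v⟫ / c) * fderiv ℝ u x ω := by
    intro x hx v
    set e : EuclideanSpace ℝ (Fin d) := v - (⟪ω, v⟫ / c) • ω with hedef
    have he : ⟪ω, e⟫ = 0 := by
      rw [hedef, inner_sub_right, real_inner_smul_right, ← hcdef]
      field_simp
      ring
    have h0 := step2 e he x hx
    have hv : v = e + (⟪ω, v⟫ / c) • ω := by rw [hedef]; abel
    conv_lhs => rw [hv]
    rw [map_add, map_smul, h0, smul_eq_mul]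
    ring
  -- Step 4 : solve along the segment from x₀ to x
  set G₀ : ℝ := fderiv ℝ u x₀ ω with hG₀def
  have step4 : ∀ x ∈ Ω, u x = u x₀ * Real.cos ⟪ω, x - x₀⟫
      + (G₀ / c) * Real.sin ⟪ω, x - x₀⟫ := by
    intro x hx
    set v : EuclideanSpace ℝ (Fin d) := x - x₀ with hvdef
    set κ : ℝ := ⟪ω, v⟫ with hκdef
    set T : Set ℝ := {t : ℝ | x₀ + t • v ∈ Ω} with hTdef
    have hT0 : (0:ℝ) ∈ T := by show x₀ + (0:ℝ) • v ∈ Ω; simpa using hx₀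
    have hT1 : (1:ℝ) ∈ T := by
      show x₀ + (1:ℝ) • v ∈ Ω
      rw [one_smul, hvdef, add_sub_cancel]
      exact hx
    have hg0 : fderiv ℝ u x₀ v = (κ / c) * G₀ := step3 x₀ hx₀ v
    by_cases hκ0 : κ = 0
    · -- direction orthogonal to ω : u is constant along the segment
      have hgconst : ∀ t ∈ T, fderiv ℝ u (x₀ + t • v) v = fderiv ℝ u x₀ v := by
        intro t ht
        have hconst : ∀ r ∈ T, HasDerivAt (fun q : ℝ => fderiv ℝ u (x₀ + q • v) v) 0 r := by
          intro r hr
          have h := osc_aux_line_g hΩo hu x₀ v v hr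
          rw [hB _ hr v v, ← hκdef, hκ0] at h
          simpa using h
        have := osc_aux_const (osc_aux_line_convex Ω hΩc x₀ v)
          (osc_aux_line_open Ω hΩo x₀ v) hconst ht hT0
        simpa using this
      have hfconst : ∀ r ∈ T, HasDerivAt (fun q : ℝ => u (x₀ + q • v)) 0 r := by
        intro r hr
        have h := osc_aux_line_f hΩo hu x₀ v hr
        rw [hgconst r hr, hg0, hκ0] at h
        simpa using h
      have h01 := osc_aux_const (osc_aux_line_convex Ω hΩc x₀ v)
        (osc_aux_line_open Ω hΩo x₀ v) hfconst hT1 hT0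
      have hxv : x₀ + v = x := by rw [hvdef]; abel
      simp only [one_smul, zero_smul, add_zero] at h01
      rw [hxv] at h01
      rw [hκ0]
      simpa using h01
    · have hode := osc_aux_ode (osc_aux_line_convex Ω hΩc x₀ v)
        (osc_aux_line_open Ω hΩo x₀ v) hT0 (κ := κ) hκ0
        (f := fun t => u (x₀ + t • v)) (g := fun t => fderiv ℝ u (x₀ + t • v) v)
        (fun t ht => osc_aux_line_f hΩo hu x₀ v ht)
        (fun t ht => by
          have h := osc_aux_line_g hΩo hu x₀ v v ht
          rw [hB _ ht v v, ← hκdef] at h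
          convert h using 1
          ring) 1 hT1
      have hxv : x₀ + v = x := by rw [hvdef]; abel
      simp only [one_smul, zero_smul, add_zero, mul_one] at hode
      rw [hxv] at hode
      rw [hode, hg0]
      have hfrac : κ / c * G₀ / κ = G₀ / c := by field_simp
      rw [hfrac]
  -- conclude with angle subtraction formulas
  refine ⟨u x₀ * Real.cos ⟪ω, x₀⟫ - (G₀ / c) * Real.sin ⟪ω, x₀⟫,
    u x₀ * Real.sin ⟪ω, x₀⟫ + (G₀ / c) * Real.cos ⟪ω, x₀⟫, fun x hx => ?_⟩
  have h := step4 x hx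
  rw [inner_sub_right] at h
  rw [h, Real.cos_sub, Real.sin_sub]
  ring

/-- derivative of the explicit solution -/
lemma osc_aux_phi_deriv {d : ℕ} (ω : EuclideanSpace ℝ (Fin d)) (A B : ℝ)
    (y : EuclideanSpace ℝ (Fin d)) :
    HasFDerivAt (fun z : EuclideanSpace ℝ (Fin d) => A * Real.cos ⟪ω, z⟫ + B * Real.sin ⟪ω, z⟫)
      ((A * (-Real.sin ⟪ω, y⟫) + B * Real.cos ⟪ω, y⟫) • (innerSL ℝ ω)) y := by
  have hθ : HasFDerivAt (fun z : EuclideanSpace ℝ (Fin d) => ⟪ω, z⟫) (innerSL ℝ ω) y := by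
    have := (innerSL ℝ ω).hasFDerivAt (x := y)
    simpa [coe_innerSL_apply] using this
  have hc : HasFDerivAt (fun z : EuclideanSpace ℝ (Fin d) => Real.cos ⟪ω, z⟫)
      ((-Real.sin ⟪ω, y⟫) • innerSL ℝ ω) y :=
    (Real.hasDerivAt_cos ⟪ω, y⟫).comp_hasFDerivAt y hθ
  have hs : HasFDerivAt (fun z : EuclideanSpace ℝ (Fin d) => Real.sin ⟪ω, z⟫)
      ((Real.cos ⟪ω, y⟫) • innerSL ℝ ω) y :=
    (Real.hasDerivAt_sin ⟪ω, y⟫).comp_hasFDerivAt y hθ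
  have := (hc.const_mul A).add (hs.const_mul B)
  rw [smul_smul, smul_smul, ← add_smul] at this
  exact this

lemma osc_backward {d : ℕ} (Ω : Set (EuclideanSpace ℝ (Fin d))) (hΩo : IsOpen Ω)
    (ω : EuclideanSpace ℝ (Fin d)) (u : EuclideanSpace ℝ (Fin d) → ℝ) (C₁ C₂ : ℝ)
    (h : ∀ x ∈ Ω, u x = C₁ * Real.cos ⟪ω, x⟫ + C₂ * Real.sin ⟪ω, x⟫) :
    ∀ x ∈ Ω, ∀ i j : Fin d,
      fderiv ℝ (fun y => fderiv ℝ u y (EuclideanSpace.single j (1 : ℝ))) x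
          (EuclideanSpace.single i (1 : ℝ)) + ω i * ω j * u x = 0 := by
  set φ : EuclideanSpace ℝ (Fin d) → ℝ :=
    fun z => C₁ * Real.cos ⟪ω, z⟫ + C₂ * Real.sin ⟪ω, z⟫ with hφdef
  have hinner : ∀ k : Fin d, ⟪ω, EuclideanSpace.single k (1:ℝ)⟫ = ω k := by
    intro k
    rw [EuclideanSpace.inner_single_right]
    simp
  intro x hx i j
  have hev : (fun y => fderiv ℝ u y (EuclideanSpace.single j (1:ℝ)))
      =ᶠ[nhds x] (fun y => fderiv ℝ φ y (EuclideanSpace.single j (1:ℝ))) := by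
    filter_upwards [hΩo.mem_nhds hx] with y hy
    have huφ : u =ᶠ[nhds y] φ := by
      filter_upwards [hΩo.mem_nhds hy] with z hz
      exact h z hz
    rw [huφ.fderiv_eq]
  rw [hev.fderiv_eq]
  have hφj : (fun y => fderiv ℝ φ y (EuclideanSpace.single j (1:ℝ)))
      = fun y => (C₂ * ω j) * Real.cos ⟪ω, y⟫ + (-(C₁ * ω j)) * Real.sin ⟪ω, y⟫ := by
    funext y
    rw [(osc_aux_phi_deriv ω C₁ C₂ y).fderiv]
    rw [ContinuousLinearMap.smul_apply, innerSL_apply_apply, hinner j]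
    simp only [smul_eq_mul]
    ring
  rw [hφj, (osc_aux_phi_deriv ω (C₂ * ω j) (-(C₁ * ω j)) x).fderiv,
    ContinuousLinearMap.smul_apply, innerSL_apply_apply, hinner i, h x hx]
  simp only [smul_eq_mul]
  ring

/-- Let `ω ∈ ℝ^d`, `ω ≠ 0`, and `c = ω ⊗ ω`. A `C²` function `u` on an open hypercube
`Ω = (a₁,b₁) × ⋯ × (a_d,b_d)` satisfies `∂²u/∂xᵢ∂xⱼ + ωᵢ ωⱼ u = 0` on `Ω` for all `i, j`
iff `u x = C₁ cos (ω·x) + C₂ sin (ω·x)` on `Ω` for some constants `C₁, C₂`. -/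
theorem osc_pde_kernel_characterization {d : ℕ} (a b : Fin d → ℝ) (hab : ∀ k, a k < b k)
    (ω : EuclideanSpace ℝ (Fin d)) (hω : ω ≠ 0)
    (u : EuclideanSpace ℝ (Fin d) → ℝ)
    (hu : ContDiffOn ℝ 2 u {x : EuclideanSpace ℝ (Fin d) | ∀ k, x k ∈ Ioo (a k) (b k)}) :
    (∀ x ∈ {x : EuclideanSpace ℝ (Fin d) | ∀ k, x k ∈ Ioo (a k) (b k)}, ∀ i j : Fin d,
        fderiv ℝ (fun y => fderiv ℝ u y (EuclideanSpace.single j (1 : ℝ))) x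
            (EuclideanSpace.single i (1 : ℝ)) + ω i * ω j * u x = 0) ↔
    ∃ C₁ C₂ : ℝ, ∀ x ∈ {x : EuclideanSpace ℝ (Fin d) | ∀ k, x k ∈ Ioo (a k) (b k)},
      u x = C₁ * Real.cos ⟪ω, x⟫ + C₂ * Real.sin ⟪ω, x⟫ := by
  have hΩo := osc_aux_omega_open a b
  have hΩc := osc_aux_omega_convex a b
  set x₀ : EuclideanSpace ℝ (Fin d) :=
    (WithLp.equiv 2 (Fin d → ℝ)).symm (fun k => (a k + b k) / 2) with hx₀def
  have hx₀ : x₀ ∈ {x : EuclideanSpace ℝ (Fin d) | ∀ k, x k ∈ Ioo (a k) (b k)} := by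
    intro k
    have hx₀k : x₀ k = (a k + b k) / 2 := rfl
    rw [hx₀k]
    exact ⟨by linarith [hab k], by linarith [hab k]⟩
  constructor
  · intro hpde
    apply osc_forward _ hΩo hΩc x₀ hx₀ ω hω u hu
    intro x hx v w
    apply osc_aux_bilin ω (u x)
    intro i j
    have h1 := hpde x hx i j
    rw [osc_aux_fderiv_Fw hΩo hu (EuclideanSpace.single j (1:ℝ)) hx
      (EuclideanSpace.single i (1:ℝ))] at h1
    linarith
  · rintro ⟨C₁, C₂, h⟩
    exact osc_backward _ hΩo ω u C₁ C₂ h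
end

section
/- Let X, Y be Banach spaces with X continuously embedded in Y. Suppose Φ₁, Φ₂ are lower semi-continuous semi-norms on Y, coercive on X, with finite-dimensional kernels, and satisfy cᵢ‖u‖_X ≤ ‖u‖_Y + Φᵢ(u) ≤ Cᵢ‖u‖_X for all u ∈ X (i = 1,2) with 0 < cᵢ < Cᵢ < ∞. Then there exist 0 < c < C < ∞ such that c‖u‖_X ≤ ‖u‖_Y + (Φ₁ □ Φ₂)(u) ≤ C‖u‖_X for all u ∈ X. -/
open Filter
open scoped ENNReal Pointwise Topology

/-- A lower semi-continuous semi-norm on a normed space: a proper, positively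
one-homogeneous, subadditive, lower semi-continuous functional `Φ : X → [0,∞]`
admitting a linear continuous projection onto its kernel. -/
def IsLscSeminorm {X : Type*} [NormedAddCommGroup X] [NormedSpace ℝ X]
    (Φ : X → ℝ≥0∞) : Prop :=
  (∃ x, Φ x ≠ ⊤) ∧
  (∀ (c : ℝ) (x : X), Φ (c • x) = ENNReal.ofReal |c| * Φ x) ∧
  (∀ x y : X, Φ (x + y) ≤ Φ x + Φ y) ∧
  LowerSemicontinuous Φ ∧
  (∃ P : X →L[ℝ] X, (∀ x, P (P x) = P x) ∧ Set.range P = {x | Φ x = 0})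

/-- `P` is a linear continuous onto projection onto the kernel of `Φ`. -/
def IsKernelProjection {X : Type*} [NormedAddCommGroup X] [NormedSpace ℝ X]
    (Φ : X → ℝ≥0∞) (P : X →L[ℝ] X) : Prop :=
  (∀ x, P (P x) = P x) ∧ Set.range P = {x | Φ x = 0}

/-- `Φ` is coercive: `‖u − Pu‖ ≤ C Φ(u)` for some kernel projection `P` and `C > 0`. -/
def IsCoerciveSeminorm {X : Type*} [NormedAddCommGroup X] [NormedSpace ℝ X]
    (Φ : X → ℝ≥0∞) : Prop :=
  ∃ (P : X →L[ℝ] X) (C : ℝ), 0 < C ∧ IsKernelProjection Φ P ∧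
    ∀ u, ENNReal.ofReal ‖u - P u‖ ≤ ENNReal.ofReal C * Φ u

/-- The kernel of `Φ` is a finite-dimensional subspace. -/
def HasFinDimKernel {X : Type*} [NormedAddCommGroup X] [NormedSpace ℝ X]
    (Φ : X → ℝ≥0∞) : Prop :=
  ∃ V : Submodule ℝ X, (V : Set X) = {x | Φ x = 0} ∧ FiniteDimensional ℝ V

/-- Reflexivity of a Banach space, encoded via weak sequential compactness of bounded
sequences (Eberlein–Šmulian). -/
def IsReflexiveSpace (X : Type*) [NormedAddCommGroup X] [NormedSpace ℝ X] : Prop :=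
  ∀ u : ℕ → X, Bornology.IsBounded (Set.range u) →
    ∃ (φ : ℕ → ℕ) (x : X), StrictMono φ ∧
      ∀ f : X →L[ℝ] ℝ, Tendsto (fun n => f (u (φ n))) atTop (nhds (f x))

/-- The infimal convolution of two `[0,∞]`-valued functionals. -/
noncomputable def InfConv {X : Type*} [NormedAddCommGroup X] [NormedSpace ℝ X]
    (Φ₁ Φ₂ : X → ℝ≥0∞) (u : X) : ℝ≥0∞ :=
  ⨅ v : X, Φ₁ (u - v) + Φ₂ v

set_option synthInstance.maxHeartbeats 1000000
set_option maxHeartbeats 1600000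

private lemma nx_zero' {Y : Type*} [NormedAddCommGroup Y] [NormedSpace ℝ Y]
    {NX : Y → ℝ≥0∞} (h : ∀ (c : ℝ) (y : Y), NX (c • y) = ENNReal.ofReal |c| * NX y) :
    NX 0 = 0 := by
  have h0 := h 0 0
  simpa using h0

private lemma nx_neg' {Y : Type*} [NormedAddCommGroup Y] [NormedSpace ℝ Y]
    {NX : Y → ℝ≥0∞} (h : ∀ (c : ℝ) (y : Y), NX (c • y) = ENNReal.ofReal |c| * NX y)
    (y : Y) : NX (-y) = NX y := by
  have h0 := h (-1) y
  simpa using h0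

private lemma nx_sum' {Y : Type*} [NormedAddCommGroup Y] [NormedSpace ℝ Y]
    {NX : Y → ℝ≥0∞} (hs : ∀ (c : ℝ) (y : Y), NX (c • y) = ENNReal.ofReal |c| * NX y)
    (hadd : ∀ y z : Y, NX (y + z) ≤ NX y + NX z)
    {ι : Type*} (s : Finset ι) (f : ι → Y) :
    NX (∑ i ∈ s, f i) ≤ ∑ i ∈ s, NX (f i) := by
  classical
  induction s using Finset.induction with
  | empty => simp [nx_zero' hs]
  | insert _ _ hnotmem ih =>
      rw [Finset.sum_insert hnotmem, Finset.sum_insert hnotmem]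
      exact le_trans (hadd _ _) (add_le_add le_rfl ih)

private lemma finrank_bound' {Y : Type*} [NormedAddCommGroup Y] [NormedSpace ℝ Y]
    {NX : Y → ℝ≥0∞}
    (hs : ∀ (c : ℝ) (y : Y), NX (c • y) = ENNReal.ofReal |c| * NX y)
    (hadd : ∀ y z : Y, NX (y + z) ≤ NX y + NX z)
    (Z : Submodule ℝ Y) [FiniteDimensional ℝ Z]
    (hfin : ∀ z ∈ Z, NX z ≠ ⊤) :
    ∃ K : ℝ, 0 < K ∧ ∀ z ∈ Z, NX z ≤ ENNReal.ofReal K * ENNReal.ofReal ‖z‖ := by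
  classical
  set b := Module.finBasis ℝ Z with hb
  set g : Fin (Module.finrank ℝ Z) → ℝ :=
    fun i => ‖LinearMap.toContinuousLinearMap (b.coord i)‖ * (NX (b i : Y)).toReal with hg
  have hgnn : ∀ i, 0 ≤ g i := fun i =>
    mul_nonneg (ContinuousLinearMap.opNorm_nonneg _) ENNReal.toReal_nonneg
  refine ⟨1 + ∑ i, g i, by positivity, ?_⟩
  intro z hz
  set zZ : Z := ⟨z, hz⟩ with hzZ
  have hrepr : (∑ i, b.repr zZ i • (b i : Y)) = z := by
    have := b.sum_repr zZ
    calc (∑ i, b.repr zZ i • (b i : Y)) = ((∑ i, b.repr zZ i • b i : Z) : Y) := by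
          push_cast; rfl
      _ = z := by rw [this]
  calc NX z = NX (∑ i, b.repr zZ i • (b i : Y)) := by rw [hrepr]
    _ ≤ ∑ i, NX (b.repr zZ i • (b i : Y)) := nx_sum' hs hadd _ _
    _ ≤ ∑ i, ENNReal.ofReal (g i * ‖z‖) := by
        refine Finset.sum_le_sum fun i _ => ?_
        rw [hs]
        have hcoord : |b.repr zZ i| ≤ ‖LinearMap.toContinuousLinearMap (b.coord i)‖ * ‖z‖ := by
          have h1 := (LinearMap.toContinuousLinearMap (b.coord i)).le_opNorm zZ
          have h2 : ‖zZ‖ = ‖z‖ := rfl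
          simpa [Real.norm_eq_abs, h2, LinearMap.coe_toContinuousLinearMap', Module.Basis.coord_apply]
            using h1
        have hbi : NX (b i : Y) = ENNReal.ofReal ((NX (b i : Y)).toReal) :=
          (ENNReal.ofReal_toReal (hfin _ (b i).2)).symm
        rw [hbi, ← ENNReal.ofReal_mul (abs_nonneg _)]
        refine ENNReal.ofReal_le_ofReal ?_
        have : g i * ‖z‖ = (‖LinearMap.toContinuousLinearMap (b.coord i)‖ * ‖z‖) * (NX (b i : Y)).toReal := by
          rw [hg]; ring
        rw [this]
        exact mul_le_mul_of_nonneg_right hcoord ENNReal.toReal_nonneg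
    _ = ENNReal.ofReal ((∑ i, g i) * ‖z‖) := by
        rw [Finset.sum_mul, ENNReal.ofReal_sum_of_nonneg]
        intro i _
        exact mul_nonneg (hgnn i) (norm_nonneg _)
    _ ≤ ENNReal.ofReal (1 + ∑ i, g i) * ENNReal.ofReal ‖z‖ := by
        rw [← ENNReal.ofReal_mul (by positivity)]
        refine ENNReal.ofReal_le_ofReal ?_
        have : (0:ℝ) ≤ ∑ i, g i := Finset.sum_nonneg fun i _ => hgnn i
        nlinarith [norm_nonneg z]

private def finiteNXSubmodule {Y : Type*} [NormedAddCommGroup Y] [NormedSpace ℝ Y]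
    (NX : Y → ℝ≥0∞)
    (hs : ∀ (c : ℝ) (y : Y), NX (c • y) = ENNReal.ofReal |c| * NX y)
    (hadd : ∀ y z : Y, NX (y + z) ≤ NX y + NX z) : Submodule ℝ Y where
  carrier := {y | NX y ≠ ⊤}
  add_mem' := fun {a b} ha hb =>
    ne_top_of_le_ne_top (ENNReal.add_ne_top.2 ⟨ha, hb⟩) (hadd a b)
  zero_mem' := by simp [Set.mem_setOf_eq, nx_zero' hs]
  smul_mem' := fun c y hy => by
    simp only [Set.mem_setOf_eq, hs]
    exact ENNReal.mul_ne_top ENNReal.ofReal_ne_top hy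

private lemma mem_finiteNXSubmodule {Y : Type*} [NormedAddCommGroup Y] [NormedSpace ℝ Y]
    {NX : Y → ℝ≥0∞}
    (hs : ∀ (c : ℝ) (y : Y), NX (c • y) = ENNReal.ofReal |c| * NX y)
    (hadd : ∀ y z : Y, NX (y + z) ≤ NX y + NX z) (y : Y) :
    y ∈ finiteNXSubmodule NX hs hadd ↔ NX y ≠ ⊤ := Iff.rfl

/-- Norm equivalence for the infimal convolution: let `Y` be a Banach space and let
`NX : Y → [0,∞]` be the extended norm of a Banach space `X = {NX ≠ ∞}` continuously
embedded in `Y`. If `Φ₁, Φ₂` are lower semi-continuous semi-norms on `Y`, coercive on `X`,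
with finite-dimensional kernels, satisfying `cᵢ ‖u‖_X ≤ ‖u‖_Y + Φᵢ(u) ≤ Cᵢ ‖u‖_X` on `X`,
then `c ‖u‖_X ≤ ‖u‖_Y + (Φ₁ □ Φ₂)(u) ≤ C ‖u‖_X` on `X` for some `0 < c < C`. -/
theorem infconv_norm_equivalence {Y : Type*}
    [NormedAddCommGroup Y] [NormedSpace ℝ Y] [CompleteSpace Y]
    (NX : Y → ℝ≥0∞)
    -- `NX` is an extended norm on `Y`, defining the subspace `X = {NX ≠ ∞}`
    (hNXsmul : ∀ (c : ℝ) (y : Y), NX (c • y) = ENNReal.ofReal |c| * NX y)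
    (hNXadd : ∀ y z : Y, NX (y + z) ≤ NX y + NX z)
    (hNXdefinite : ∀ y : Y, NX y = 0 → y = 0)
    -- `X` is complete (a Banach space)
    (hNXcomplete : ∀ u : ℕ → Y, (∀ n, NX (u n) ≠ ⊤) →
      (∀ ε : ℝ, 0 < ε → ∃ N, ∀ p q, N ≤ p → N ≤ q → NX (u p - u q) < ENNReal.ofReal ε) →
      ∃ y : Y, NX y ≠ ⊤ ∧ Tendsto (fun n => NX (u n - y)) atTop (nhds 0))
    -- `X` is continuously embedded in `Y`
    (hemb : ∃ k : ℝ, 0 < k ∧ ∀ y : Y, ENNReal.ofReal ‖y‖ ≤ ENNReal.ofReal k * NX y)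
    (Φ₁ Φ₂ : Y → ℝ≥0∞) (h₁ : IsLscSeminorm Φ₁) (h₂ : IsLscSeminorm Φ₂)
    (hk₁ : HasFinDimKernel Φ₁) (hk₂ : HasFinDimKernel Φ₂)
    -- coercivity on `X`
    (hc₁ : ∃ (P₁ : Y →L[ℝ] Y) (C₁' : ℝ), 0 < C₁' ∧ IsKernelProjection Φ₁ P₁ ∧
      ∀ u : Y, NX (u - P₁ u) ≤ ENNReal.ofReal C₁' * Φ₁ u)
    (hc₂ : ∃ (P₂ : Y →L[ℝ] Y) (C₂' : ℝ), 0 < C₂' ∧ IsKernelProjection Φ₂ P₂ ∧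
      ∀ u : Y, NX (u - P₂ u) ≤ ENNReal.ofReal C₂' * Φ₂ u)
    -- two-sided norm equivalence for `Φ₁` and `Φ₂`
    (c₁ C₁ c₂ C₂ : ℝ) (hcC₁ : 0 < c₁ ∧ c₁ < C₁) (hcC₂ : 0 < c₂ ∧ c₂ < C₂)
    (heq₁ : ∀ u : Y, NX u ≠ ⊤ →
      ENNReal.ofReal c₁ * NX u ≤ ENNReal.ofReal ‖u‖ + Φ₁ u ∧
        ENNReal.ofReal ‖u‖ + Φ₁ u ≤ ENNReal.ofReal C₁ * NX u)
    (heq₂ : ∀ u : Y, NX u ≠ ⊤ →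
      ENNReal.ofReal c₂ * NX u ≤ ENNReal.ofReal ‖u‖ + Φ₂ u ∧
        ENNReal.ofReal ‖u‖ + Φ₂ u ≤ ENNReal.ofReal C₂ * NX u) :
    ∃ c C : ℝ, 0 < c ∧ c < C ∧ ∀ u : Y, NX u ≠ ⊤ →
      ENNReal.ofReal c * NX u ≤ ENNReal.ofReal ‖u‖ + InfConv Φ₁ Φ₂ u ∧
        ENNReal.ofReal ‖u‖ + InfConv Φ₁ Φ₂ u ≤ ENNReal.ofReal C * NX u := by
  obtain ⟨k, hkpos, hembk⟩ := hemb
  obtain ⟨P₁, C₁', hC₁'pos, ⟨hP₁proj, hP₁range⟩, hcoer₁⟩ := hc₁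
  obtain ⟨P₂, C₂', hC₂'pos, ⟨hP₂proj, hP₂range⟩, hcoer₂⟩ := hc₂
  obtain ⟨V₁, hV₁set, hV₁fd⟩ := hk₁
  obtain ⟨V₂, hV₂set, hV₂fd⟩ := hk₂
  haveI := hV₁fd; haveI := hV₂fd
  set F : Submodule ℝ Y := finiteNXSubmodule NX hNXsmul hNXadd with hF
  set Z : Submodule ℝ Y := (V₁ ⊔ V₂) ⊓ F with hZdef
  haveI : FiniteDimensional ℝ (V₁ ⊔ V₂ : Submodule ℝ Y) := Submodule.finiteDimensional_sup _ _
  haveI : FiniteDimensional ℝ Z := Submodule.finiteDimensional_of_le inf_le_left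
  obtain ⟨K, hKpos, hKbound⟩ := finrank_bound' hNXsmul hNXadd Z
    (fun z hz => ((Submodule.mem_inf).1 hz).2)
  set D : ℝ := 1 + k * C₁' + k * C₂' with hDdef
  set M : ℝ := K * D + C₁' + C₂' with hMdef
  have hkC1 : 0 ≤ k * C₁' := (mul_pos hkpos hC₁'pos).le
  have hkC2 : 0 ≤ k * C₂' := (mul_pos hkpos hC₂'pos).le
  have hDpos : 0 < D := by rw [hDdef]; linarith
  have hKD : 0 < K * D := mul_pos hKpos hDpos
  have hMpos : 0 < M := by rw [hMdef]; linarith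
  have hC₁pos : 0 < C₁ := lt_trans hcC₁.1 hcC₁.2
  refine ⟨min (1/M) (C₁/2), C₁, lt_min (one_div_pos.2 hMpos) (half_pos hC₁pos),
    lt_of_le_of_lt (min_le_right _ _) (by linarith), ?_⟩
  intro u hu
  constructor
  · -- lower bound
    rw [InfConv, ENNReal.add_iInf]
    refine le_iInf fun v => ?_
    by_cases hA : Φ₁ (u - v) = ⊤
    · rw [hA]; simp
    by_cases hB : Φ₂ v = ⊤
    · rw [hB]; simp
    set a : Y := (u - v) - P₁ (u - v) with hadef
    set b : Y := v - P₂ v with hbdef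
    set z : Y := P₁ (u - v) + P₂ v with hzdef
    set S : ℝ≥0∞ := ENNReal.ofReal ‖u‖ + (Φ₁ (u - v) + Φ₂ v) with hSdef
    have hNa : NX a ≤ ENNReal.ofReal C₁' * Φ₁ (u - v) := hcoer₁ (u - v)
    have hNb : NX b ≤ ENNReal.ofReal C₂' * Φ₂ v := hcoer₂ v
    have hNafin : NX a ≠ ⊤ :=
      ne_top_of_le_ne_top (ENNReal.mul_ne_top ENNReal.ofReal_ne_top hA) hNa
    have hNbfin : NX b ≠ ⊤ :=
      ne_top_of_le_ne_top (ENNReal.mul_ne_top ENNReal.ofReal_ne_top hB) hNb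
    have hNzu : NX z ≤ NX u + (NX a + NX b) := by
      have hzu : z = u + (-a + -b) := by rw [hzdef, hadef, hbdef]; abel
      calc NX z = NX (u + (-a + -b)) := by rw [← hzu]
        _ ≤ NX u + NX (-a + -b) := hNXadd _ _
        _ ≤ NX u + (NX (-a) + NX (-b)) := add_le_add le_rfl (hNXadd _ _)
        _ = NX u + (NX a + NX b) := by
            rw [nx_neg' hNXsmul, nx_neg' hNXsmul]
    have hzmem : z ∈ Z := by
      rw [hZdef, Submodule.mem_inf]
      constructor
      · refine Submodule.add_mem_sup ?_ ?_
        · rw [← SetLike.mem_coe, hV₁set]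
          show Φ₁ (P₁ (u - v)) = 0
          have hr : P₁ (u - v) ∈ Set.range P₁ := ⟨u - v, rfl⟩
          rw [hP₁range] at hr; exact hr
        · rw [← SetLike.mem_coe, hV₂set]
          show Φ₂ (P₂ v) = 0
          have hr : P₂ v ∈ Set.range P₂ := ⟨v, rfl⟩
          rw [hP₂range] at hr; exact hr
      · show NX z ≠ ⊤
        exact ne_top_of_le_ne_top
          (ENNReal.add_ne_top.2 ⟨hu, ENNReal.add_ne_top.2 ⟨hNafin, hNbfin⟩⟩) hNzu
    have hAS : Φ₁ (u - v) ≤ S := le_trans le_self_add le_add_self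
    have hBS : Φ₂ v ≤ S := le_trans le_add_self le_add_self
    have huS : ENNReal.ofReal ‖u‖ ≤ S := le_self_add
    have haS : NX a ≤ ENNReal.ofReal C₁' * S := hNa.trans (mul_le_mul' le_rfl hAS)
    have hbS : NX b ≤ ENNReal.ofReal C₂' * S := hNb.trans (mul_le_mul' le_rfl hBS)
    have hna : ENNReal.ofReal ‖a‖ ≤ ENNReal.ofReal (k * C₁') * S := by
      calc ENNReal.ofReal ‖a‖ ≤ ENNReal.ofReal k * NX a := hembk a
        _ ≤ ENNReal.ofReal k * (ENNReal.ofReal C₁' * S) := mul_le_mul' le_rfl haS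
        _ = ENNReal.ofReal (k * C₁') * S := by
            rw [ENNReal.ofReal_mul hkpos.le, mul_assoc]
    have hnb : ENNReal.ofReal ‖b‖ ≤ ENNReal.ofReal (k * C₂') * S := by
      calc ENNReal.ofReal ‖b‖ ≤ ENNReal.ofReal k * NX b := hembk b
        _ ≤ ENNReal.ofReal k * (ENNReal.ofReal C₂' * S) := mul_le_mul' le_rfl hbS
        _ = ENNReal.ofReal (k * C₂') * S := by
            rw [ENNReal.ofReal_mul hkpos.le, mul_assoc]
    have hnz : ENNReal.ofReal ‖z‖ ≤ ENNReal.ofReal D * S := by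
      have h1 : ‖z‖ ≤ ‖u‖ + (‖a‖ + ‖b‖) := by
        have hzu : z = u + (-a + -b) := by rw [hzdef, hadef, hbdef]; abel
        calc ‖z‖ = ‖u + (-a + -b)‖ := by rw [← hzu]
          _ ≤ ‖u‖ + ‖-a + -b‖ := norm_add_le _ _
          _ ≤ ‖u‖ + (‖-a‖ + ‖-b‖) := by gcongr; exact norm_add_le _ _
          _ = ‖u‖ + (‖a‖ + ‖b‖) := by rw [norm_neg, norm_neg]
      calc ENNReal.ofReal ‖z‖ ≤ ENNReal.ofReal (‖u‖ + (‖a‖ + ‖b‖)) :=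
            ENNReal.ofReal_le_ofReal h1
        _ ≤ ENNReal.ofReal ‖u‖ + (ENNReal.ofReal ‖a‖ + ENNReal.ofReal ‖b‖) :=
            le_trans (ENNReal.ofReal_add_le) (add_le_add le_rfl ENNReal.ofReal_add_le)
        _ ≤ 1 * S + (ENNReal.ofReal (k * C₁') * S + ENNReal.ofReal (k * C₂') * S) := by
            rw [one_mul]; exact add_le_add huS (add_le_add hna hnb)
        _ = (1 + (ENNReal.ofReal (k * C₁') + ENNReal.ofReal (k * C₂'))) * S := by ring
        _ = ENNReal.ofReal D * S := by
            rw [hDdef, ← ENNReal.ofReal_one, ← ENNReal.ofReal_add hkC1 hkC2,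
              ← ENNReal.ofReal_add (by norm_num) (by linarith)]
            ring_nf
    have hNz : NX z ≤ ENNReal.ofReal (K * D) * S := by
      calc NX z ≤ ENNReal.ofReal K * ENNReal.ofReal ‖z‖ := hKbound z hzmem
        _ ≤ ENNReal.ofReal K * (ENNReal.ofReal D * S) := mul_le_mul' le_rfl hnz
        _ = ENNReal.ofReal (K * D) * S := by rw [ENNReal.ofReal_mul hKpos.le, mul_assoc]
    have hNu : NX u ≤ ENNReal.ofReal M * S := by
      have huzab : u = z + a + b := by rw [hzdef, hadef, hbdef]; abel
      calc NX u = NX (z + a + b) := by rw [← huzab]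
        _ ≤ NX (z + a) + NX b := hNXadd _ _
        _ ≤ NX z + NX a + NX b := add_le_add (hNXadd _ _) le_rfl
        _ ≤ ENNReal.ofReal (K * D) * S + ENNReal.ofReal C₁' * S + ENNReal.ofReal C₂' * S :=
            add_le_add (add_le_add hNz haS) hbS
        _ = (ENNReal.ofReal (K * D) + ENNReal.ofReal C₁' + ENNReal.ofReal C₂') * S := by ring
        _ = ENNReal.ofReal M * S := by
            rw [hMdef, ← ENNReal.ofReal_add hKD.le hC₁'pos.le,
              ← ENNReal.ofReal_add (by linarith) hC₂'pos.le]
    calc ENNReal.ofReal (min (1/M) (C₁/2)) * NX u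
        ≤ ENNReal.ofReal (1/M) * NX u := by
          gcongr
          exact min_le_left _ _
      _ ≤ ENNReal.ofReal (1/M) * (ENNReal.ofReal M * S) := mul_le_mul' le_rfl hNu
      _ = ENNReal.ofReal (1/M * M) * S := by rw [ENNReal.ofReal_mul (one_div_pos.2 hMpos).le, mul_assoc]
      _ = S := by rw [one_div_mul_cancel hMpos.ne', ENNReal.ofReal_one, one_mul]
  · -- upper bound
    have hΦ₂0 : Φ₂ 0 = 0 := nx_zero' h₂.2.1
    have hIC : InfConv Φ₁ Φ₂ u ≤ Φ₁ u := by
      calc InfConv Φ₁ Φ₂ u ≤ Φ₁ (u - 0) + Φ₂ 0 := iInf_le _ 0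
        _ = Φ₁ u := by rw [hΦ₂0, sub_zero, add_zero]
    calc ENNReal.ofReal ‖u‖ + InfConv Φ₁ Φ₂ u ≤ ENNReal.ofReal ‖u‖ + Φ₁ u :=
          add_le_add le_rfl hIC
      _ ≤ ENNReal.ofReal C₁ * NX u := (heq₁ u hu).2
end

section
/- Existence for regularized linear inverse problems: let X, Y be Banach spaces with X reflexive, K : X → Y linear continuous, F : Y → (−∞,∞] convex, lower semi-continuous, coercive and bounded from below, and Φ a lower semi-continuous, coercive semi-norm on X with finite-dimensional kernel. Then the problem min_{u ∈ X} F(Ku) + Φ(u) admits a solution. -/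
open Filter
open scoped ENNReal Pointwise Topology

section Helpers
variable {E : Type*}

lemma tikh_ennreal_bound {m s : ℝ} {t : ℝ≥0∞} (h : (m : EReal) + (t : EReal) ≤ (s : EReal)) :
    t ≤ ENNReal.ofReal (s - m) := by
  have ht : t ≠ ⊤ := by
    intro hh
    rw [hh, EReal.coe_ennreal_top] at h
    have : (m : EReal) + ⊤ = ⊤ := by
      rw [EReal.add_top_iff_ne_bot]; exact EReal.coe_ne_bot m
    rw [this] at h
    exact (EReal.coe_lt_top s).not_ge h
  have h2 : ((m + t.toReal : ℝ) : EReal) ≤ (s : EReal) := by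
    rw [EReal.coe_add]
    have : ((t.toReal : ℝ) : EReal) = (t : EReal) := by
      rw [← EReal.toReal_coe_ennreal (x := t)]
      exact EReal.coe_toReal (by simpa using ht) (by simp)
    rw [this]; exact h
  have h3 : t.toReal ≤ s - m := by
    have := EReal.coe_le_coe_iff.1 h2; linarith
  exact (ENNReal.le_ofReal_iff_toReal_le ht (ENNReal.toReal_nonneg.trans h3)).2 h3

lemma tikh_mem_of_weak_tendsto [NormedAddCommGroup E] [NormedSpace ℝ E]
    {s : Set E} (hconv : Convex ℝ s) (hcl : IsClosed s) {y : ℕ → E} {x : E}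
    (hy : ∀ᶠ n in atTop, y n ∈ s)
    (hw : ∀ f : E →L[ℝ] ℝ, Tendsto (fun n => f (y n)) atTop (nhds (f x))) : x ∈ s := by
  by_contra hx
  obtain ⟨f, u, hfu, hux⟩ := geometric_hahn_banach_closed_point hconv hcl hx
  have h1 : ∀ᶠ n in atTop, f (y n) < u := hy.mono fun n hn => hfu _ hn
  have h2 : ∀ᶠ n in atTop, u < f (y n) := (hw f).eventually (eventually_gt_nhds hux)
  obtain ⟨n, hn1, hn2⟩ := (h1.and h2).exists
  exact absurd hn1 (not_lt.2 hn2.le)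

lemma tikh_isClosed_sublevel [TopologicalSpace E] {F : E → EReal}
    (h : LowerSemicontinuous F) (c : EReal) : IsClosed {y | F y ≤ c} := by
  rw [← isOpen_compl_iff, isOpen_iff_mem_nhds]
  intro y hy
  simp only [Set.mem_compl_iff, Set.mem_setOf_eq, not_le] at hy
  exact (h y c hy).mono fun z hz => not_le.2 hz

lemma tikh_isClosed_sublevel' [TopologicalSpace E] {Φ : E → ℝ≥0∞}
    (h : LowerSemicontinuous Φ) (c : ℝ≥0∞) : IsClosed {y | Φ y ≤ c} := by
  rw [← isOpen_compl_iff, isOpen_iff_mem_nhds]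
  intro y hy
  simp only [Set.mem_compl_iff, Set.mem_setOf_eq, not_le] at hy
  exact (h y c hy).mono fun z hz => not_le.2 hz

lemma tikh_convex_sublevel [NormedAddCommGroup E] [NormedSpace ℝ E] {F : E → EReal}
    (hFconv : ∀ (y z : E) (t : ℝ), 0 ≤ t → t ≤ 1 →
      F (t • y + (1 - t) • z) ≤ (t : EReal) * F y + ((1 - t : ℝ) : EReal) * F z)
    (c : ℝ) : Convex ℝ {y | F y ≤ (c : EReal)} := by
  intro y hy z hz a b ha hb hab
  simp only [Set.mem_setOf_eq] at *
  have hb' : b = 1 - a := by linarith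
  subst hb'
  calc F (a • y + (1 - a) • z) ≤ (a : EReal) * F y + ((1 - a : ℝ) : EReal) * F z :=
        hFconv y z a ha (by linarith)
    _ ≤ (a : EReal) * (c : EReal) + ((1 - a : ℝ) : EReal) * (c : EReal) :=
        add_le_add (mul_le_mul_of_nonneg_left hy (by exact_mod_cast ha))
          (mul_le_mul_of_nonneg_left hz (by exact_mod_cast hb))
    _ = ((a * c + (1 - a) * c : ℝ) : EReal) := by
        rw [EReal.coe_add, EReal.coe_mul, EReal.coe_mul]
    _ = (c : EReal) := by norm_num [← add_mul]

lemma tikh_convex_sublevel' [NormedAddCommGroup E] [NormedSpace ℝ E] {Φ : E → ℝ≥0∞}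
    (hhom : ∀ (c : ℝ) (x : E), Φ (c • x) = ENNReal.ofReal |c| * Φ x)
    (hadd : ∀ x y : E, Φ (x + y) ≤ Φ x + Φ y)
    (d : ℝ≥0∞) : Convex ℝ {x | Φ x ≤ d} := by
  intro y hy z hz a b ha hb hab
  simp only [Set.mem_setOf_eq] at *
  calc Φ (a • y + b • z) ≤ Φ (a • y) + Φ (b • z) := hadd _ _
    _ = ENNReal.ofReal a * Φ y + ENNReal.ofReal b * Φ z := by
        rw [hhom a y, hhom b z, abs_of_nonneg ha, abs_of_nonneg hb]
    _ ≤ ENNReal.ofReal a * d + ENNReal.ofReal b * d := by gcongr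
    _ = (ENNReal.ofReal a + ENNReal.ofReal b) * d := (add_mul _ _ _).symm
    _ = d := by rw [← ENNReal.ofReal_add ha hb, hab]; simp

set_option synthInstance.maxHeartbeats 1000000 in
set_option maxHeartbeats 1000000 in
lemma tikh_findim_inj_bound {F : Type*} [NormedAddCommGroup E] [NormedSpace ℝ E]
    [NormedAddCommGroup F] [NormedSpace ℝ F] [FiniteDimensional ℝ E]
    (T : E →ₗ[ℝ] F) (hT : Function.Injective T) :
    ∃ c : ℝ, 0 ≤ c ∧ ∀ w : E, ‖w‖ ≤ c * ‖T w‖ := by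
  have : FiniteDimensional ℝ (LinearMap.range T) := by infer_instance
  let e := LinearEquiv.ofInjective T hT
  let g := LinearMap.toContinuousLinearMap (e.symm : LinearMap.range T →ₗ[ℝ] E)
  refine ⟨‖g‖, g.opNorm_nonneg, fun w => ?_⟩
  have h1 : g (e w) = w := e.symm_apply_apply w
  calc ‖w‖ = ‖g (e w)‖ := by rw [h1]
    _ ≤ ‖g‖ * ‖e w‖ := g.le_opNorm _
    _ = ‖g‖ * ‖T w‖ := by congr 1

end Helpers

set_option maxHeartbeats 2000000 in
set_option synthInstance.maxHeartbeats 400000 in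
/-- Existence for regularized linear inverse problems: for `X` a reflexive Banach space,
`Y` a Banach space, `K : X → Y` linear continuous, `F : Y → (−∞,∞]` convex, lower
semi-continuous, coercive and bounded from below, and `Φ` a lower semi-continuous,
coercive semi-norm on `X` with finite-dimensional kernel, the problem
`min_{u ∈ X} F(Ku) + Φ(u)` admits a solution. -/
theorem tikhonov_existence {X Y : Type*}
    [NormedAddCommGroup X] [NormedSpace ℝ X] [CompleteSpace X]
    [NormedAddCommGroup Y] [NormedSpace ℝ Y] [CompleteSpace Y]
    (hrefl : IsReflexiveSpace X)
    (K : X →L[ℝ] Y) (F : Y → EReal)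
    (hFconv : ∀ (y z : Y) (t : ℝ), 0 ≤ t → t ≤ 1 →
      F (t • y + (1 - t) • z) ≤ (t : EReal) * F y + ((1 - t : ℝ) : EReal) * F z)
    (hFlsc : LowerSemicontinuous F)
    (hFcoercive : ∀ C : ℝ, ∃ R : ℝ, ∀ y : Y, F y ≤ (C : EReal) → ‖y‖ ≤ R)
    (hFbdd : ∃ m : ℝ, ∀ y : Y, (m : EReal) ≤ F y)
    (Φ : X → ℝ≥0∞) (hΦ : IsLscSeminorm Φ) (hΦc : IsCoerciveSeminorm Φ)
    (hΦk : HasFinDimKernel Φ) :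
    ∃ ustar : X, ∀ u : X, F (K ustar) + (Φ ustar : EReal) ≤ F (K u) + (Φ u : EReal) := by
  classical
  obtain ⟨-, hΦhom, hΦadd, hΦlsc, -⟩ := hΦ
  obtain ⟨P, C, hC, ⟨hPidem, hPrange⟩, hcoer⟩ := hΦc
  obtain ⟨V, hV, hVfd⟩ := hΦk
  obtain ⟨m, hm⟩ := hFbdd
  set J : X → EReal := fun u => F (K u) + (Φ u : EReal) with hJ
  by_cases htop : ∀ u : X, J u = ⊤
  · exact ⟨0, fun u => by rw [show F (K u) + (Φ u : EReal) = J u from rfl, htop u]; exact le_top⟩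
  push_neg at htop
  obtain ⟨u₀, hu₀⟩ := htop
  set μ : EReal := ⨅ u : X, J u with hμdef
  have hμle : ∀ u : X, μ ≤ J u := fun u => iInf_le _ u
  have hJm : ∀ u : X, (m : EReal) ≤ J u := fun u =>
    (hm (K u)).trans (le_add_of_nonneg_right (EReal.coe_ennreal_nonneg _))
  have hmμ : (m : EReal) ≤ μ := le_iInf hJm
  have hμtop : μ ≠ ⊤ := fun h => hu₀ (top_le_iff.1 (h ▸ hμle u₀))
  have hμbot : μ ≠ ⊥ := fun h => (EReal.coe_ne_bot m) (le_bot_iff.1 (h ▸ hmμ))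
  set μr : ℝ := μ.toReal with hμrdef
  have hμr : (μr : EReal) = μ := EReal.coe_toReal hμtop hμbot
  have hmμr : m ≤ μr := by rw [← hμr] at hmμ; exact_mod_cast hmμ
  -- minimizing sequence
  have hseq : ∀ n : ℕ, ∃ w : X, J w < ((μr + 1 / (n + 1) : ℝ) : EReal) := by
    intro n
    apply iInf_lt_iff.1
    rw [← hμdef, ← hμr, EReal.coe_lt_coe_iff]
    have : (0 : ℝ) < 1 / (n + 1) := by positivity
    linarith
  choose u hu using hseq
  have hJub : ∀ n : ℕ, J (u n) ≤ ((μr + 1 : ℝ) : EReal) := by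
    intro n
    refine (hu n).le.trans ?_
    rw [EReal.coe_le_coe_iff]
    have h1 : (1 : ℝ) / (n + 1) ≤ 1 := by
      rw [div_le_one (by positivity)]; linarith [Nat.cast_nonneg (α := ℝ) n]
    linarith
  have hFb : ∀ n : ℕ, F (K (u n)) ≤ ((μr + 1 : ℝ) : EReal) := fun n =>
    (le_add_of_nonneg_right (EReal.coe_ennreal_nonneg _)).trans (hJub n)
  set B : ℝ≥0∞ := ENNReal.ofReal (μr + 1 - m) with hBdef
  have hΦb : ∀ n : ℕ, Φ (u n) ≤ B := by
    intro n
    apply tikh_ennreal_bound (m := m) (s := μr + 1)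
    calc (m : EReal) + (Φ (u n) : EReal) ≤ F (K (u n)) + (Φ (u n) : EReal) :=
          add_le_add_left (hm _) _
      _ ≤ _ := hJub n
  obtain ⟨R, hR⟩ := hFcoercive (μr + 1)
  have hKb : ∀ n : ℕ, ‖K (u n)‖ ≤ R := fun n => hR _ (hFb n)
  have hCB0 : (0 : ℝ) ≤ C * (μr + 1 - m) := by
    have : (0:ℝ) ≤ μr + 1 - m := by linarith
    positivity
  have hPb : ∀ n : ℕ, ‖u n - P (u n)‖ ≤ C * (μr + 1 - m) := by
    intro n
    have h1 : ENNReal.ofReal ‖u n - P (u n)‖ ≤ ENNReal.ofReal (C * (μr + 1 - m)) := by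
      calc ENNReal.ofReal ‖u n - P (u n)‖ ≤ ENNReal.ofReal C * Φ (u n) := hcoer (u n)
        _ ≤ ENNReal.ofReal C * B := by gcongr; exact hΦb n
        _ = ENNReal.ofReal (C * (μr + 1 - m)) := (ENNReal.ofReal_mul hC.le).symm
    rwa [ENNReal.ofReal_le_ofReal_iff hCB0] at h1
  -- kernel decomposition
  haveI : FiniteDimensional ℝ V := hVfd
  set K' : V →ₗ[ℝ] Y := K.toLinearMap.comp V.subtype with hK'def
  set Zk : Submodule ℝ V := LinearMap.ker K' with hZkdef
  obtain ⟨W, hW⟩ := Submodule.exists_isCompl Zk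
  set T : W →ₗ[ℝ] Y := K'.comp W.subtype with hTdef
  have hTinj : Function.Injective T := by
    rw [← LinearMap.ker_eq_bot]
    rw [Submodule.eq_bot_iff]
    rintro w hw
    have h1 : (w : V) ∈ Zk := by
      rw [hZkdef, LinearMap.mem_ker]
      exact hw
    have h2 : (w : V) ∈ W := w.2
    have h3 : (w : V) ∈ Zk ⊓ W := ⟨h1, h2⟩
    rw [hW.inf_eq_bot] at h3
    exact Subtype.ext h3
  obtain ⟨c, hc0, hcb⟩ := tikh_findim_inj_bound T hTinj
  have hPu : ∀ x : X, P x ∈ V := by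
    intro x
    have h1 : P x ∈ Set.range P := ⟨x, rfl⟩
    rw [hPrange] at h1
    rw [← SetLike.mem_coe, hV]
    exact h1
  set pn : ℕ → V := fun n => ⟨P (u n), hPu (u n)⟩ with hpndef
  set zn : ℕ → Zk := fun n => Zk.projectionOnto W hW (pn n) with hzndef
  set wn : ℕ → W := fun n => W.projectionOnto Zk hW.symm (pn n) with hwndef
  have hsumn : ∀ n : ℕ, ((zn n : V) : X) + ((wn n : V) : X) = P (u n) := by
    intro n
    have := Submodule.projection_add_projection_eq_self hW (pn n)
    have h2 : (((zn n : V) + (wn n : V) : V) : X) = ((pn n : V) : X) := by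
      exact_mod_cast congrArg (fun (t : V) => (t : X)) this
    simpa using h2
  let v : ℕ → X := fun n => u n - ((zn n : V) : X)
  have hvdef : ∀ n : ℕ, v n = u n - ((zn n : V) : X) := fun n => rfl
  have hKz : ∀ n : ℕ, K ((zn n : V) : X) = 0 := by
    intro n
    have h1 : ((zn n : V)) ∈ LinearMap.ker K' := (zn n).2
    exact LinearMap.mem_ker.1 h1
  have hKv : ∀ n : ℕ, K (v n) = K (u n) := by
    intro n
    rw [hvdef n]
    simp only [map_sub, hKz n, sub_zero]
  have hΦz : ∀ n : ℕ, Φ ((zn n : V) : X) = 0 := by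
    intro n
    have h1 : ((zn n : V) : X) ∈ (V : Set X) := SetLike.coe_mem _
    rw [hV] at h1
    exact h1
  have hΦv : ∀ n : ℕ, Φ (v n) ≤ Φ (u n) := by
    intro n
    have hneg : Φ (-((zn n : V) : X)) = 0 := by
      rw [show -((zn n : V) : X) = (-1 : ℝ) • ((zn n : V) : X) by simp, hΦhom]
      rw [hΦz n]; simp
    calc Φ (v n) = Φ (u n + -((zn n : V) : X)) := by rw [hvdef n, sub_eq_add_neg]
      _ ≤ Φ (u n) + Φ (-((zn n : V) : X)) := hΦadd _ _
      _ = Φ (u n) := by rw [hneg, add_zero]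
  have hJv : ∀ n : ℕ, J (v n) ≤ J (u n) := by
    intro n
    refine add_le_add (le_of_eq (by rw [hKv n])) ?_
    exact EReal.coe_ennreal_le_coe_ennreal_iff.2 (hΦv n)
  -- norm bound on v
  have hTw : ∀ n : ℕ, T (wn n) = K (P (u n)) := by
    intro n
    have h1 : T (wn n) = K ((wn n : V) : X) := rfl
    rw [h1, ← hsumn n, map_add, hKz n, zero_add]
  have hwnorm : ∀ n : ℕ, ‖((wn n : V) : X)‖ ≤ c * (R + ‖K‖ * (C * (μr + 1 - m))) := by
    intro n
    have h1 : ‖((wn n : V) : X)‖ = ‖wn n‖ := rfl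
    rw [h1]
    refine (hcb (wn n)).trans ?_
    have h2 : ‖T (wn n)‖ ≤ R + ‖K‖ * (C * (μr + 1 - m)) := by
      rw [hTw n]
      have h3 : K (P (u n)) = K (u n) - K (u n - P (u n)) := by
        rw [map_sub]; abel
      rw [h3]
      calc ‖K (u n) - K (u n - P (u n))‖ ≤ ‖K (u n)‖ + ‖K (u n - P (u n))‖ := norm_sub_le _ _
        _ ≤ R + ‖K‖ * (C * (μr + 1 - m)) := by
            refine add_le_add (hKb n) ?_
            refine (K.le_opNorm _).trans ?_
            exact mul_le_mul_of_nonneg_left (hPb n) (norm_nonneg K)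
    exact mul_le_mul_of_nonneg_left h2 hc0
  set M : ℝ := C * (μr + 1 - m) + c * (R + ‖K‖ * (C * (μr + 1 - m))) with hMdef
  have hvb : ∀ n : ℕ, ‖v n‖ ≤ M := by
    intro n
    have h1 : v n = (u n - P (u n)) + ((wn n : V) : X) := by
      rw [hvdef n]
      have h2 : ((zn n : V) : X) = P (u n) - ((wn n : V) : X) := by
        rw [← hsumn n]; abel
      rw [h2]; abel
    rw [h1]
    calc ‖(u n - P (u n)) + ((wn n : V) : X)‖ ≤ ‖u n - P (u n)‖ + ‖((wn n : V) : X)‖ :=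
          norm_add_le _ _
      _ ≤ M := add_le_add (hPb n) (hwnorm n)
  -- weak compactness
  obtain ⟨φ, x, hφ, hwk⟩ := hrefl v (by
    rw [isBounded_iff_forall_norm_le]
    exact ⟨M, by rintro _ ⟨n, rfl⟩; exact hvb n⟩)
  -- real-valued sequences
  have hJvlt : ∀ n : ℕ, J (v n) < ((μr + 1 / (n + 1) : ℝ) : EReal) := fun n =>
    lt_of_le_of_lt (hJv n) (hu n)
  have hFvm : ∀ n : ℕ, (m : EReal) ≤ F (K (v n)) := fun n => hm _
  have hFvub : ∀ n : ℕ, F (K (v n)) ≤ ((μr + 1 : ℝ) : EReal) := fun n => by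
    rw [hKv n]; exact hFb n
  have hFfin : ∀ n : ℕ, ((F (K (v n))).toReal : EReal) = F (K (v n)) := by
    intro n
    refine EReal.coe_toReal ?_ ?_
    · intro h
      have h2 := hFvub n
      rw [h] at h2
      exact (EReal.coe_lt_top (μr + 1)).not_ge h2
    · intro h
      have h2 := hFvm n
      rw [h] at h2
      exact (EReal.bot_lt_coe m).not_ge h2
  have hΦvB : ∀ n : ℕ, Φ (v n) ≤ B := fun n => (hΦv n).trans (hΦb n)
  have hΦvfin : ∀ n : ℕ, Φ (v n) ≠ ⊤ := by
    intro n h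
    have h2 := hΦvB n
    rw [h, top_le_iff, hBdef] at h2
    exact ENNReal.ofReal_ne_top h2
  set sR : ℕ → ℝ := fun n => (F (K (v n))).toReal with hsRdef
  set tR : ℕ → ℝ := fun n => (Φ (v n)).toReal with htRdef
  have hΦcoe : ∀ n : ℕ, ((tR n : ℝ) : EReal) = ((Φ (v n) : ℝ≥0∞) : EReal) := by
    intro n
    simp only [htRdef]
    rw [show ((Φ (v n)).toReal : ℝ) = ((Φ (v n) : ℝ≥0∞) : EReal).toReal from
      (EReal.toReal_coe_ennreal).symm]
    exact EReal.coe_toReal (by simpa using hΦvfin n) (by simp)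
  have hstsum : ∀ n : ℕ, sR n + tR n ≤ μr + 1 / (n + 1) := by
    intro n
    have h1 : ((sR n + tR n : ℝ) : EReal) ≤ ((μr + 1 / (n + 1) : ℝ) : EReal) := by
      rw [EReal.coe_add, hsRdef]
      dsimp only
      rw [hFfin n, hΦcoe n]
      exact (hJvlt n).le
    exact_mod_cast h1
  have hsRmem : ∀ n : ℕ, sR n ∈ Set.Icc m (μr + 1) := by
    intro n
    constructor
    · have := hFvm n; rw [← hFfin n] at this; exact_mod_cast this
    · have := hFvub n; rw [← hFfin n] at this; exact_mod_cast this
  have htRmem : ∀ n : ℕ, tR n ∈ Set.Icc (0 : ℝ) (μr + 1 - m) := by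
    intro n
    constructor
    · exact ENNReal.toReal_nonneg
    · have h1 : (Φ (v n)).toReal ≤ B.toReal :=
        ENNReal.toReal_mono (by rw [hBdef]; exact ENNReal.ofReal_ne_top) (hΦvB n)
      rw [hBdef, ENNReal.toReal_ofReal (by linarith : (0:ℝ) ≤ μr + 1 - m)] at h1
      exact h1
  obtain ⟨a, -, ψ₁, hψ₁, hsa⟩ := tendsto_subseq_of_bounded (Metric.isBounded_Icc _ _)
    (fun n => hsRmem (φ n))
  obtain ⟨b, hbmem, ψ₂, hψ₂, htb⟩ := tendsto_subseq_of_bounded (Metric.isBounded_Icc _ _)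
    (fun n => htRmem (φ (ψ₁ n)))
  have hb0 : 0 ≤ b := by
    have := (isClosed_Icc (a := (0:ℝ)) (b := μr + 1 - m)).closure_subset hbmem
    exact this.1
  set σ : ℕ → ℕ := fun n => φ (ψ₁ (ψ₂ n)) with hσdef
  have hσmono : StrictMono σ := hφ.comp (hψ₁.comp hψ₂)
  have hsa' : Tendsto (fun n => sR (σ n)) atTop (nhds a) := hsa.comp hψ₂.tendsto_atTop
  have htb' : Tendsto (fun n => tR (σ n)) atTop (nhds b) := htb
  have hwkσ : ∀ f : X →L[ℝ] ℝ, Tendsto (fun n => f (v (σ n))) atTop (nhds (f x)) := by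
    intro f
    exact (hwk f).comp (hψ₁.comp hψ₂).tendsto_atTop
  -- a + b ≤ μr
  have hab : a + b ≤ μr := by
    have h1 : Tendsto (fun n => sR (σ n) + tR (σ n)) atTop (nhds (a + b)) := hsa'.add htb'
    have h2 : Tendsto (fun n : ℕ => μr + 1 / (n + 1 : ℝ)) atTop (nhds (μr + 0)) := by
      exact tendsto_const_nhds.add tendsto_one_div_add_atTop_nhds_zero_nat
    rw [add_zero] at h2
    refine le_of_tendsto_of_tendsto' h1 h2 fun n => ?_
    refine (hstsum (σ n)).trans ?_
    have h3 : (1 : ℝ) / (σ n + 1) ≤ 1 / (n + 1) := by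
      apply div_le_div_of_nonneg_left (by norm_num) (by positivity)
      have h4 := hσmono.le_apply (x := n)
      have h5 : (n : ℝ) ≤ (σ n : ℝ) := Nat.cast_le.2 h4
      linarith
    linarith
  -- F (K x) ≤ a
  have hFx : F (K x) ≤ (a : EReal) := by
    have key : ∀ j : ℕ, F (K x) ≤ ((a + 1 / (j + 1) : ℝ) : EReal) := by
      intro j
      have hconv := tikh_convex_sublevel hFconv (a + 1 / (j + 1)) (E := Y) (F := F)
      have hcl := tikh_isClosed_sublevel hFlsc ((a + 1 / (j + 1) : ℝ) : EReal) (E := Y)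
      have hmem : ∀ᶠ n in atTop, K (v (σ n)) ∈ {y : Y | F y ≤ ((a + 1 / (j + 1) : ℝ) : EReal)} := by
        have hlt : ∀ᶠ n in atTop, sR (σ n) < a + 1 / (j + 1) :=
          hsa'.eventually_lt_const (by
            have : (0:ℝ) < 1 / (j+1) := by positivity
            linarith)
        refine hlt.mono fun n hn => ?_
        simp only [Set.mem_setOf_eq]
        rw [← hFfin (σ n)]
        exact_mod_cast hn.le
      refine tikh_mem_of_weak_tendsto hconv hcl hmem ?_
      intro f
      exact hwkσ (f.comp K)
    have hlim : Tendsto (fun j : ℕ => ((a + 1 / (j + 1 : ℝ) : ℝ) : EReal)) atTop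
        (nhds ((a : ℝ) : EReal)) := by
      have h2 : Tendsto (fun j : ℕ => a + 1 / (j + 1 : ℝ)) atTop (nhds (a + 0)) :=
        tendsto_const_nhds.add tendsto_one_div_add_atTop_nhds_zero_nat
      rw [add_zero] at h2
      exact (EReal.continuous_coe_iff.2 continuous_id).continuousAt.tendsto.comp h2
    exact ge_of_tendsto' hlim key
  -- Φ x ≤ ofReal b
  have hΦx : Φ x ≤ ENNReal.ofReal b := by
    have key : ∀ j : ℕ, Φ x ≤ ENNReal.ofReal (b + 1 / (j + 1)) := by
      intro j
      have hconv := tikh_convex_sublevel' hΦhom hΦadd (ENNReal.ofReal (b + 1 / (j + 1))) (E := X)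
      have hcl := tikh_isClosed_sublevel' hΦlsc (ENNReal.ofReal (b + 1 / (j + 1))) (E := X)
      have hmem : ∀ᶠ n in atTop, v (σ n) ∈ {w : X | Φ w ≤ ENNReal.ofReal (b + 1 / (j + 1))} := by
        have hlt : ∀ᶠ n in atTop, tR (σ n) < b + 1 / (j + 1) :=
          htb'.eventually_lt_const (by
            have : (0:ℝ) < 1 / (j+1) := by positivity
            linarith : b < b + 1 / (j + 1))
        refine hlt.mono fun n hn => ?_
        simp only [Set.mem_setOf_eq]
        refine (ENNReal.le_ofReal_iff_toReal_le (hΦvfin (σ n)) ?_).2 hn.le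
        exact ENNReal.toReal_nonneg.trans hn.le
      exact tikh_mem_of_weak_tendsto hconv hcl hmem hwkσ
    have hlim : Tendsto (fun j : ℕ => ENNReal.ofReal (b + 1 / (j + 1 : ℝ))) atTop
        (nhds (ENNReal.ofReal b)) := by
      have h2 : Tendsto (fun j : ℕ => b + 1 / (j + 1 : ℝ)) atTop (nhds (b + 0)) :=
        tendsto_const_nhds.add tendsto_one_div_add_atTop_nhds_zero_nat
      rw [add_zero] at h2
      exact (ENNReal.continuous_ofReal.continuousAt).tendsto.comp h2
    exact ge_of_tendsto' hlim key
  -- conclusion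
  refine ⟨x, fun u' => ?_⟩
  have hfinal : J x ≤ J u' := by
    calc J x = F (K x) + ((Φ x : ℝ≥0∞) : EReal) := rfl
      _ ≤ (a : EReal) + ((ENNReal.ofReal b : ℝ≥0∞) : EReal) :=
          add_le_add hFx (EReal.coe_ennreal_le_coe_ennreal_iff.2 hΦx)
      _ = ((a + b : ℝ) : EReal) := by
          rw [EReal.coe_ennreal_ofReal, max_eq_left hb0, ← EReal.coe_add]
      _ ≤ (μr : EReal) := EReal.coe_le_coe_iff.2 hab
      _ = μ := hμr
      _ ≤ J u' := hμle u'
  exact hfinal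
end

section
/- Discrete kernel characterization: let ω = (ω₁, ω₂) ∈ ℝ² ∖ πℤ², and let c be the symmetric 2×2 matrix with c₁₁ = 2 − 2cos(ω₁), c₂₂ = 2 − 2cos(ω₂), and c₁₂ = c₂₁ = 1 + cos(ω₁ − ω₂) − cos(ω₁) − cos(ω₂). Then u : ℤ² → ℝ satisfies the three finite-difference equations u_{i+1,j} − 2u_{i,j} + u_{i−1,j} + c₁₁u_{i,j} = 0, u_{i,j+1} − 2u_{i,j} + u_{i,j−1} + c₂₂u_{i,j} = 0, and u_{i+1,j} + u_{i−1,j} + u_{i,j+1} + u_{i,j−1} − u_{i+1,j−1} − u_{i−1,j+1} − 2u_{i,j} + 2c₁₂u_{i,j} = 0 for all (i,j) ∈ ℤ² if and only if there are constants C₁, C₂ ∈ ℝ with u_{i,j} = C₁ cos(ω₁i + ω₂j) + C₂ sin(ω₁i + ω₂j) for all (i,j). -/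
open Real

private lemma trig_sum (C₁ C₂ x a : ℝ) :
    (C₁ * cos (x + a) + C₂ * sin (x + a)) + (C₁ * cos (x - a) + C₂ * sin (x - a))
      = 2 * cos a * (C₁ * cos x + C₂ * sin x) := by
  rw [cos_add, cos_sub, sin_add, sin_sub]; ring

private lemma S1 (ω₁ ω₂ C₁ C₂ : ℝ) (i j : ℤ) :
    (C₁ * cos (ω₁ * ↑(i+1) + ω₂ * j) + C₂ * sin (ω₁ * ↑(i+1) + ω₂ * j))
      + (C₁ * cos (ω₁ * ↑(i-1) + ω₂ * j) + C₂ * sin (ω₁ * ↑(i-1) + ω₂ * j))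
      = 2 * cos ω₁ * (C₁ * cos (ω₁ * i + ω₂ * j) + C₂ * sin (ω₁ * i + ω₂ * j)) := by
  push_cast
  rw [show ω₁*((i:ℝ)+1)+ω₂*(j:ℝ) = (ω₁*i+ω₂*j)+ω₁ by ring,
      show ω₁*((i:ℝ)-1)+ω₂*(j:ℝ) = (ω₁*i+ω₂*j)-ω₁ by ring]
  exact trig_sum C₁ C₂ _ ω₁

private lemma S2 (ω₁ ω₂ C₁ C₂ : ℝ) (i j : ℤ) :
    (C₁ * cos (ω₁ * i + ω₂ * ↑(j+1)) + C₂ * sin (ω₁ * i + ω₂ * ↑(j+1)))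
      + (C₁ * cos (ω₁ * i + ω₂ * ↑(j-1)) + C₂ * sin (ω₁ * i + ω₂ * ↑(j-1)))
      = 2 * cos ω₂ * (C₁ * cos (ω₁ * i + ω₂ * j) + C₂ * sin (ω₁ * i + ω₂ * j)) := by
  push_cast
  rw [show ω₁*(i:ℝ)+ω₂*((j:ℝ)+1) = (ω₁*i+ω₂*j)+ω₂ by ring,
      show ω₁*(i:ℝ)+ω₂*((j:ℝ)-1) = (ω₁*i+ω₂*j)-ω₂ by ring]
  exact trig_sum C₁ C₂ _ ω₂

private lemma S3 (ω₁ ω₂ C₁ C₂ : ℝ) (i j : ℤ) :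
    (C₁ * cos (ω₁ * ↑(i+1) + ω₂ * ↑(j-1)) + C₂ * sin (ω₁ * ↑(i+1) + ω₂ * ↑(j-1)))
      + (C₁ * cos (ω₁ * ↑(i-1) + ω₂ * ↑(j+1)) + C₂ * sin (ω₁ * ↑(i-1) + ω₂ * ↑(j+1)))
      = 2 * cos (ω₁ - ω₂) * (C₁ * cos (ω₁ * i + ω₂ * j) + C₂ * sin (ω₁ * i + ω₂ * j)) := by
  push_cast
  rw [show ω₁*((i:ℝ)+1)+ω₂*((j:ℝ)-1) = (ω₁*i+ω₂*j)+(ω₁-ω₂) by ring,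
      show ω₁*((i:ℝ)-1)+ω₂*((j:ℝ)+1) = (ω₁*i+ω₂*j)-(ω₁-ω₂) by ring]
  exact trig_sum C₁ C₂ _ (ω₁ - ω₂)

private lemma rec_zero (v : ℤ → ℝ) (t : ℝ)
    (h : ∀ i : ℤ, v (i + 1) + v (i - 1) = t * v i)
    (h0 : v 0 = 0) (h1 : v 1 = 0) : ∀ i, v i = 0 := by
  have key : ∀ i : ℤ, v i = 0 ∧ v (i + 1) = 0 := by
    intro i
    induction i using Int.induction_on with
    | zero => exact ⟨h0, h1⟩
    | succ n ih =>
      refine ⟨ih.2, ?_⟩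
      have hh := h ((n : ℤ) + 1)
      rw [show ((n:ℤ)+1) - 1 = (n:ℤ) by ring, ih.1, ih.2] at hh
      linarith
    | pred n ih =>
      refine ⟨?_, by rw [show (-(n:ℤ) - 1) + 1 = -(n:ℤ) by ring]; exact ih.1⟩
      have hh := h (-(n:ℤ))
      rw [ih.1, ih.2] at hh
      linarith
  intro i; exact (key i).1

private lemma main_case (ω₁ ω₂ : ℝ) (hs : sin ω₁ ≠ 0) (w : ℤ → ℤ → ℝ)
    (e1 : ∀ i j : ℤ, w (i+1) j + w (i-1) j = 2 * cos ω₁ * w i j)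
    (e2 : ∀ i j : ℤ, w i (j+1) + w i (j-1) = 2 * cos ω₂ * w i j)
    (e3 : ∀ i j : ℤ, w (i+1) (j-1) + w (i-1) (j+1) = 2 * cos (ω₁ - ω₂) * w i j)
    (h00 : w 0 0 = 0) (h10 : w 1 0 = 0) :
    ∀ i j, w i j = 0 := by
  have row0 : ∀ i, w i 0 = 0 :=
    rec_zero (fun i => w i 0) (2 * cos ω₁) (fun i => e1 i 0) h00 h10
  have hneg : ∀ i : ℤ, w i (-1) = - w i 1 := by
    intro i
    have hh := e2 i 0
    rw [row0 i] at hh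
    norm_num at hh
    linarith
  have row1 : ∀ i, w i 1 = 0 := by
    have per : ∀ i : ℤ, w (i+1) 1 = w (i-1) 1 := by
      intro i
      have h3 := e3 i 0
      rw [row0 i] at h3
      norm_num at h3
      rw [hneg (i+1)] at h3
      linarith
    have step : ∀ i : ℤ, w (i+1) 1 = cos ω₁ * w i 1 := by
      intro i
      have ha := e1 i 1
      have hb := per i
      nlinarith [ha, hb]
    intro i
    have hper2 : w (i+2) 1 = w i 1 := by
      have hp := per (i+1)
      rw [show (i:ℤ)+1+1 = i+2 by ring, show (i:ℤ)+1-1 = i by ring] at hp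
      exact hp
    have hst1 := step i
    have hst2 := step (i+1)
    rw [show (i:ℤ)+1+1 = i+2 by ring] at hst2
    have hc := sin_sq_add_cos_sq ω₁
    have hz : (sin ω₁)^2 * w i 1 = 0 := by
      linear_combination w i 1 * hc + cos ω₁ * hst1 + hst2 - hper2
    rcases mul_eq_zero.mp hz with h | h
    · exact absurd h (pow_ne_zero 2 hs)
    · exact h
  intro i j
  exact rec_zero (fun j => w i j) (2 * cos ω₂) (fun j => e2 i j) (row0 i) (row1 i) j


/-- Discrete kernel characterization for oscillation TGV: for
`ω = (ω₁, ω₂) ∈ ℝ² ∖ πℤ²` and the matrix `c` with entries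
`c₁₁ = 2 − 2cos ω₁`, `c₂₂ = 2 − 2cos ω₂`,
`c₁₂ = c₂₁ = 1 + cos(ω₁ − ω₂) − cos ω₁ − cos ω₂`, a function `u : ℤ² → ℝ`
satisfies the discrete equations `E∇u + cu = 0` iff it is a discrete sinusoid. -/
theorem discrete_kernel_characterization (ω₁ ω₂ : ℝ)
    (hω : ¬ ((∃ k : ℤ, ω₁ = k * π) ∧ (∃ k : ℤ, ω₂ = k * π)))
    (u : ℤ → ℤ → ℝ) :
    ((∀ i j : ℤ, u (i + 1) j - 2 * u i j + u (i - 1) j + (2 - 2 * cos ω₁) * u i j = 0) ∧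
     (∀ i j : ℤ, u i (j + 1) - 2 * u i j + u i (j - 1) + (2 - 2 * cos ω₂) * u i j = 0) ∧
     (∀ i j : ℤ, u (i + 1) j + u (i - 1) j + u i (j + 1) + u i (j - 1)
        - u (i + 1) (j - 1) - u (i - 1) (j + 1) - 2 * u i j
        + 2 * (1 + cos (ω₁ - ω₂) - cos ω₁ - cos ω₂) * u i j = 0)) ↔
    ∃ C₁ C₂ : ℝ, ∀ i j : ℤ,
      u i j = C₁ * cos (ω₁ * i + ω₂ * j) + C₂ * sin (ω₁ * i + ω₂ * j) := by
  constructor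
  · rintro ⟨h1, h2, h3⟩
    have E1 : ∀ i j : ℤ, u (i+1) j + u (i-1) j = 2 * cos ω₁ * u i j := by
      intro i j; linear_combination h1 i j
    have E2 : ∀ i j : ℤ, u i (j+1) + u i (j-1) = 2 * cos ω₂ * u i j := by
      intro i j; linear_combination h2 i j
    have E3 : ∀ i j : ℤ, u (i+1) (j-1) + u (i-1) (j+1) = 2 * cos (ω₁ - ω₂) * u i j := by
      intro i j; linear_combination h1 i j + h2 i j - h3 i j
    have hsin : sin ω₁ ≠ 0 ∨ sin ω₂ ≠ 0 := by
      by_contra hc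
      push_neg at hc
      refine hω ⟨?_, ?_⟩
      · obtain ⟨k, hk⟩ := Real.sin_eq_zero_iff.mp hc.1; exact ⟨k, hk.symm⟩
      · obtain ⟨k, hk⟩ := Real.sin_eq_zero_iff.mp hc.2; exact ⟨k, hk.symm⟩
    rcases hsin with hs | hs
    · set C₁ : ℝ := u 0 0 with hC₁
      set C₂ : ℝ := (u 1 0 - u 0 0 * cos ω₁) / sin ω₁ with hC₂
      set w : ℤ → ℤ → ℝ :=
        fun i j => u i j - (C₁ * cos (ω₁ * i + ω₂ * j) + C₂ * sin (ω₁ * i + ω₂ * j)) with hw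
      have e1 : ∀ i j : ℤ, w (i+1) j + w (i-1) j = 2 * cos ω₁ * w i j := by
        intro i j; simp only [hw]
        linear_combination E1 i j - S1 ω₁ ω₂ C₁ C₂ i j
      have e2 : ∀ i j : ℤ, w i (j+1) + w i (j-1) = 2 * cos ω₂ * w i j := by
        intro i j; simp only [hw]
        linear_combination E2 i j - S2 ω₁ ω₂ C₁ C₂ i j
      have e3 : ∀ i j : ℤ, w (i+1) (j-1) + w (i-1) (j+1) = 2 * cos (ω₁ - ω₂) * w i j := by
        intro i j; simp only [hw]
        linear_combination E3 i j - S3 ω₁ ω₂ C₁ C₂ i j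
      have h00 : w 0 0 = 0 := by
        simp only [hw]
        norm_num
        simp [hC₁]
      have h10 : w 1 0 = 0 := by
        simp only [hw]
        rw [show ω₁ * ((1:ℤ):ℝ) + ω₂ * ((0:ℤ):ℝ) = ω₁ by push_cast; ring]
        rw [hC₂, hC₁]
        field_simp
        ring
      have hz := main_case ω₁ ω₂ hs w e1 e2 e3 h00 h10
      refine ⟨C₁, C₂, fun i j => ?_⟩
      have hzz := hz i j
      simp only [hw] at hzz
      linarith
    · set C₁ : ℝ := u 0 0 with hC₁
      set C₂ : ℝ := (u 0 1 - u 0 0 * cos ω₂) / sin ω₂ with hC₂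
      set w : ℤ → ℤ → ℝ :=
        fun i j => u i j - (C₁ * cos (ω₁ * i + ω₂ * j) + C₂ * sin (ω₁ * i + ω₂ * j)) with hw
      have e1 : ∀ i j : ℤ, w (i+1) j + w (i-1) j = 2 * cos ω₁ * w i j := by
        intro i j; simp only [hw]
        linear_combination E1 i j - S1 ω₁ ω₂ C₁ C₂ i j
      have e2 : ∀ i j : ℤ, w i (j+1) + w i (j-1) = 2 * cos ω₂ * w i j := by
        intro i j; simp only [hw]
        linear_combination E2 i j - S2 ω₁ ω₂ C₁ C₂ i j
      have e3 : ∀ i j : ℤ, w (i+1) (j-1) + w (i-1) (j+1) = 2 * cos (ω₁ - ω₂) * w i j := by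
        intro i j; simp only [hw]
        linear_combination E3 i j - S3 ω₁ ω₂ C₁ C₂ i j
      have h00 : w 0 0 = 0 := by
        simp only [hw]
        norm_num
        simp [hC₁]
      have h01 : w 0 1 = 0 := by
        simp only [hw]
        rw [show ω₁ * ((0:ℤ):ℝ) + ω₂ * ((1:ℤ):ℝ) = ω₂ by push_cast; ring]
        rw [hC₂, hC₁]
        field_simp
        ring
      have hz := main_case ω₂ ω₁ hs (fun i j => w j i)
        (fun i j => e2 j i) (fun i j => e1 j i)
        (fun i j => by
          have h3' := e3 j i
          rw [show cos (ω₂ - ω₁) = cos (ω₁ - ω₂) by rw [← neg_sub ω₁ ω₂, cos_neg]]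
          linarith)
        h00 h01
      refine ⟨C₁, C₂, fun i j => ?_⟩
      have hzz := hz j i
      simp only [hw] at hzz
      linarith
  · rintro ⟨C₁, C₂, hu⟩
    refine ⟨fun i j => ?_, fun i j => ?_, fun i j => ?_⟩
    · rw [hu (i+1) j, hu (i-1) j, hu i j]
      linear_combination S1 ω₁ ω₂ C₁ C₂ i j
    · rw [hu i (j+1), hu i (j-1), hu i j]
      linear_combination S2 ω₁ ω₂ C₁ C₂ i j
    · rw [hu (i+1) j, hu (i-1) j, hu i (j+1), hu i (j-1),
          hu (i+1) (j-1), hu (i-1) (j+1), hu i j]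
      linear_combination S1 ω₁ ω₂ C₁ C₂ i j + S2 ω₁ ω₂ C₁ C₂ i j - S3 ω₁ ω₂ C₁ C₂ i j
end
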